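/- arXiv:2206.14666 — 5 statements merged into one kernel-verified Lean document; each statement's English description precedes it below -/
import Mathlib

section
/- Let k ≥ 2, let 0 < α₁ < α₂ < … < α_{k−1} < 1 and p₁, …, p_{k−1} ∈ (0,1] with Σ_{m=1}^{k−1} p_m = 1, and let Y be an integrable real-valued random variable having a unique α_m-quantile for each m = 1,…,k−1. Define the spectral risk measure ρ^φ(Y) := Σ_{m=1}^{k−1} p_m CVaR_{α_m}(Y). Let G_k : ℝ → ℝ be convex with subgradient G_k′ and let G₁, …, G_{k−1} : ℝ → ℝ be such that for every 𝔞_k ∈ ℝ and each m = 1,…,k−1 the map x ↦ G_m(x) − (x p_m/(1−α_m)) G_k′(𝔞_k) is increasing, and assume E|G_m(Y)| < ∞ for all m = 1,…,k. Define, for 𝔞₁ ≤ … ≤ 𝔞_{k−1} and 𝔞_k ∈ ℝ, the scoring function S(𝔞₁, …, 𝔞_{k−1}, 𝔞_k, y) := Σ_{m=1}^{k−1} (1{y ≤ 𝔞_m} − α_m)(G_m(𝔞_m) − G_m(y)) − G_k(𝔞_k) + G_k(y) + G_k′(𝔞_k)[ 𝔞_k + Σ_{m=1}^{k−1} (p_m/(1−α_m))(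 (1{y > 𝔞_m} − (1−α_m)) 𝔞_m − 1{y > 𝔞_m} y ) ]. Then S is consistent for the mapping M(Y) = (VaR_{α₁}(Y), …, VaR_{α_{k−1}}(Y), ρ^φ(Y)): E[S(M(Y), Y)] ≤ E[S(𝔞₁, …, 𝔞_k, Y)] for all 𝔞 ∈ ℝ^k with 𝔞₁ ≤ … ≤ 𝔞_{k−1}. -/
open MeasureTheory

/-- Value-at-risk at level `α` of the loss `X`: the `α`-quantile
`VaR_α(X) = inf {x : P(X ≤ x) ≥ α}`. -/
noncomputable def VaR {Ω : Type*} [MeasurableSpace Ω] (P : Measure Ω) (X : Ω → ℝ) (α : ℝ) : ℝ :=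
  sInf {x : ℝ | α ≤ (P {ω | X ω ≤ x}).toReal}

/-- Conditional value-at-risk: `CVaR_α(X) = (1-α)⁻¹ ∫_α^1 VaR_u(X) du`. -/
noncomputable def CVaR {Ω : Type*} [MeasurableSpace Ω] (P : Measure Ω) (X : Ω → ℝ) (α : ℝ) : ℝ :=
  (1 - α)⁻¹ * ∫ u in α..1, VaR P X u

/-- `q` is an `α`-quantile of `Y`: `P(Y < q) ≤ α ≤ P(Y ≤ q)`. -/
def IsQuantile {Ω : Type*} [MeasurableSpace Ω] (P : Measure Ω) (Y : Ω → ℝ) (α q : ℝ) : Prop :=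
  (P {ω | Y ω < q}).toReal ≤ α ∧ α ≤ (P {ω | Y ω ≤ q}).toReal

open Set Filter Topology

section FZaux

variable {Ω : Type*} [MeasurableSpace Ω] (P : Measure Ω) [IsProbabilityMeasure P] (Y : Ω → ℝ)

lemma FZ_F_mono : Monotone (fun x => (P {ω | Y ω ≤ x}).toReal) := by
  intro x y hxy
  exact ENNReal.toReal_mono (measure_ne_top _ _)
    (measure_mono (fun ω hω => le_trans hω hxy))

lemma FZ_quantile_lb {α q : ℝ} (hq : IsQuantile P Y α q)
    (huniq : ∀ r, IsQuantile P Y α r → r = q) {x : ℝ}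
    (hx : α ≤ (P {ω | Y ω ≤ x}).toReal) : q ≤ x := by
  by_contra h
  push_neg at h
  have hxq : IsQuantile P Y α x := by
    refine ⟨le_trans ?_ hq.1, hx⟩
    exact ENNReal.toReal_mono (measure_ne_top _ _)
      (measure_mono (fun ω hω => lt_trans hω h))
  exact absurd (huniq x hxq) (ne_of_lt h)

lemma FZ_VaR_eq {α q : ℝ} (hq : IsQuantile P Y α q)
    (huniq : ∀ r, IsQuantile P Y α r → r = q) : VaR P Y α = q := by
  refine le_antisymm (csInf_le ⟨q, fun x hx => FZ_quantile_lb P Y hq huniq hx⟩ hq.2)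
    (le_csInf ⟨q, hq.2⟩ (fun x hx => FZ_quantile_lb P Y hq huniq hx))

lemma FZ_exists_F_ge {u : ℝ} (hu : u < 1) : ∃ x : ℝ, u ≤ (P {ω | Y ω ≤ x}).toReal := by
  have hmono : Monotone (fun n : ℕ => {ω | Y ω ≤ (n:ℝ)}) := by
    intro n m hnm ω hω
    simp only [mem_setOf_eq] at hω ⊢
    exact le_trans hω (by exact_mod_cast hnm)
  have hU : (⋃ n : ℕ, {ω | Y ω ≤ (n:ℝ)}) = univ := by
    ext ω
    simp only [mem_iUnion, mem_setOf_eq, mem_univ, iff_true]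
    exact exists_nat_ge (Y ω)
  have h1 : Tendsto (fun n : ℕ => P {ω | Y ω ≤ (n:ℝ)}) atTop (𝓝 1) := by
    have := tendsto_measure_iUnion_atTop (μ := P) hmono
    rw [hU] at this
    simpa [measure_univ, Function.comp_def] using this
  have hlt : ENNReal.ofReal u < 1 := by
    rcases le_or_gt u 0 with h | h
    · simpa [ENNReal.ofReal_eq_zero.2 h] using zero_lt_one
    · exact ENNReal.ofReal_lt_one.2 hu
  obtain ⟨n, hn⟩ := ((tendsto_order.1 h1).1 _ hlt).exists
  exact ⟨n, (ENNReal.ofReal_le_iff_le_toReal (measure_ne_top _ _)).1 hn.le⟩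

lemma FZ_F_VaR_ge (hYm : Measurable Y) {α q : ℝ} (hq : IsQuantile P Y α q)
    (huniq : ∀ r, IsQuantile P Y α r → r = q) {u : ℝ} (hαu : α ≤ u) (hu : u < 1) :
    u ≤ (P {ω | Y ω ≤ VaR P Y u}).toReal := by
  set s := VaR P Y u with hs
  have hbdd : BddBelow {x : ℝ | u ≤ (P {ω | Y ω ≤ x}).toReal} :=
    ⟨q, fun x hx => FZ_quantile_lb P Y hq huniq (le_trans hαu hx)⟩
  have hne : {x : ℝ | u ≤ (P {ω | Y ω ≤ x}).toReal}.Nonempty := FZ_exists_F_ge P Y hu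
  have hstep : ∀ ε : ℝ, 0 < ε → u ≤ (P {ω | Y ω ≤ s + ε}).toReal := by
    intro ε hε
    have : sInf {x : ℝ | u ≤ (P {ω | Y ω ≤ x}).toReal} < s + ε := by
      have : s = sInf {x : ℝ | u ≤ (P {ω | Y ω ≤ x}).toReal} := hs
      linarith
    obtain ⟨x, hxmem, hxlt⟩ := (csInf_lt_iff hbdd hne).1 this
    exact le_trans hxmem (FZ_F_mono P Y hxlt.le)
  have hTend : Tendsto (fun n : ℕ => P {ω | Y ω ≤ s + 1 / (n + 1)}) atTop
      (𝓝 (P {ω | Y ω ≤ s})) := by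
    have hInt : (⋂ n : ℕ, {ω | Y ω ≤ s + 1 / ((n:ℝ) + 1)}) = {ω | Y ω ≤ s} := by
      ext ω
      simp only [mem_iInter, mem_setOf_eq]
      constructor
      · intro h
        refine le_of_forall_pos_le_add (fun ε hε => ?_)
        obtain ⟨n, hn⟩ := exists_nat_one_div_lt hε
        exact le_trans (h n) (by linarith)
      · intro h n
        have : (0:ℝ) < 1 / ((n:ℝ) + 1) := by positivity
        linarith
    have := tendsto_measure_iInter_atTop (μ := P)
      (s := fun n : ℕ => {ω | Y ω ≤ s + 1 / ((n:ℝ) + 1)})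
      (fun n => (hYm measurableSet_Iic).nullMeasurableSet)
      (fun n m hnm ω hω => by
        simp only [mem_setOf_eq] at hω ⊢
        have h1 : (1:ℝ) / ((m:ℝ) + 1) ≤ 1 / ((n:ℝ) + 1) := by
          apply one_div_le_one_div_of_le (by positivity)
          exact_mod_cast Nat.succ_le_succ hnm
        linarith)
      ⟨0, measure_ne_top _ _⟩
    rwa [hInt] at this
  have hle : ENNReal.ofReal u ≤ P {ω | Y ω ≤ s} := by
    refine ge_of_tendsto hTend (Eventually.of_forall (fun n => ?_))
    have := hstep (1 / ((n:ℝ) + 1)) (by positivity)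
    exact (ENNReal.ofReal_le_iff_le_toReal (measure_ne_top _ _)).2 this
  exact (ENNReal.ofReal_le_iff_le_toReal (measure_ne_top _ _)).1 hle

lemma FZ_VaR_le_iff (hYm : Measurable Y) {α q : ℝ} (hq : IsQuantile P Y α q)
    (huniq : ∀ r, IsQuantile P Y α r → r = q) {u : ℝ} (hαu : α ≤ u) (hu : u < 1) (x : ℝ) :
    VaR P Y u ≤ x ↔ u ≤ (P {ω | Y ω ≤ x}).toReal := by
  constructor
  · intro h
    exact le_trans (FZ_F_VaR_ge P Y hYm hq huniq hαu hu) (FZ_F_mono P Y h)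
  · intro h
    exact csInf_le ⟨q, fun z hz => FZ_quantile_lb P Y hq huniq (le_trans hαu hz)⟩ h

lemma FZ_VaR_ge (hYm : Measurable Y) {α q : ℝ} (hq : IsQuantile P Y α q)
    (huniq : ∀ r, IsQuantile P Y α r → r = q) {u : ℝ} (hαu : α ≤ u) (hu : u < 1) :
    q ≤ VaR P Y u :=
  le_csInf (FZ_exists_F_ge P Y hu)
    (fun x hx => FZ_quantile_lb P Y hq huniq (le_trans hαu hx))

end FZaux
lemma FZ_CVaR_eq {Ω : Type*} [MeasurableSpace Ω] (P : Measure Ω) [IsProbabilityMeasure P]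
    (Y : Ω → ℝ) (hYm : Measurable Y) (hY : Integrable Y P) {α q : ℝ}
    (hα0 : 0 < α) (hα1 : α < 1) (hq : IsQuantile P Y α q)
    (huniq : ∀ r, IsQuantile P Y α r → r = q) :
    CVaR P Y α = q + (1 - α)⁻¹ * ∫ ω, max (Y ω - q) 0 ∂P := by
  set F : ℝ → ℝ := fun x => (P {ω | Y ω ≤ x}).toReal with hFdef
  set g : ℝ → ℝ := fun u => VaR P Y u with hgdef
  set Ep : ℝ := ∫ ω, max (Y ω - q) 0 ∂P with hEp
  -- basic facts
  have hgq : ∀ u ∈ Ioo α 1, q ≤ g u := fun u hu =>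
    FZ_VaR_ge P Y hYm hq huniq hu.1.le hu.2
  have hiff : ∀ u ∈ Ioo α 1, ∀ x, g u ≤ x ↔ u ≤ F x := fun u hu x =>
    FZ_VaR_le_iff P Y hYm hq huniq hu.1.le hu.2 x
  have hFmono : Monotone F := FZ_F_mono P Y
  have hset : ∀ u ∈ Ioo α 1, {t : ℝ | F (q + t) < u} ∩ Ioi 0 = Ioo 0 (g u - q) := by
    intro u hu
    ext t
    simp only [mem_inter_iff, mem_setOf_eq, mem_Ioi, mem_Ioo]
    constructor
    · rintro ⟨h1, h2⟩
      exact ⟨h2, lt_sub_iff_add_lt'.2 (not_le.1 fun hc =>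
        absurd ((hiff u hu (q + t)).1 hc) (not_le.2 h1))⟩
    · rintro ⟨h2, h1⟩
      have hlt : q + t < g u := lt_sub_iff_add_lt'.1 h1
      exact ⟨not_le.1 fun hc => absurd ((hiff u hu (q + t)).2 hc) (not_le.2 hlt), h2⟩
  -- the kernel
  set e : ℝ × ℝ → ENNReal := fun z => ({z : ℝ × ℝ | F (q + z.2) < z.1}).indicator 1 z with hedef
  have hSmeas : MeasurableSet {z : ℝ × ℝ | F (q + z.2) < z.1} := by
    have hm : Measurable fun t : ℝ => F (q + t) :=
      (hFmono.comp (fun a b hab => by show q + a ≤ q + b; linarith : Monotone fun t : ℝ => q + t)).measurable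
    exact measurableSet_lt (hm.comp measurable_snd) measurable_fst
  have he_meas : Measurable e := measurable_const.indicator hSmeas
  set να : Measure ℝ := volume.restrict (Ioo α 1) with hνα
  set ν0 : Measure ℝ := volume.restrict (Ioi (0:ℝ)) with hν0
  have L1 : ∀ u ∈ Ioo α 1, (∫⁻ t, e (u, t) ∂ν0) = ENNReal.ofReal (g u - q) := by
    intro u hu
    have h1 : (fun t => e (u, t)) = ({t : ℝ | F (q + t) < u}).indicator 1 := by
      funext t
      simp only [hedef, Set.indicator_apply, mem_setOf_eq, Pi.one_apply]
    have h2 : MeasurableSet {t : ℝ | F (q + t) < u} := by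
      have hm : Measurable fun t : ℝ => F (q + t) :=
        (hFmono.comp (fun a b hab => by show q + a ≤ q + b; linarith : Monotone fun t : ℝ => q + t)).measurable
      exact hm measurableSet_Iio
    rw [h1, lintegral_indicator_one h2, hν0, Measure.restrict_apply h2, hset u hu,
      Real.volume_Ioo, sub_zero]
  have hswap : ∫⁻ u, (∫⁻ t, e (u, t) ∂ν0) ∂να = ∫⁻ t, (∫⁻ u, e (u, t) ∂να) ∂ν0 :=
    lintegral_lintegral_swap he_meas.aemeasurable
  have L3 : ∀ t ∈ Ioi (0:ℝ), (∫⁻ u, e (u, t) ∂να) = P {ω | q + t < Y ω} := by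
    intro t ht
    have hqt : α ≤ F (q + t) := le_trans hq.2 (hFmono (by linarith [ht.out] : q ≤ q + t))
    have h1 : (fun u => e (u, t)) = (Ioi (F (q + t))).indicator 1 := by
      funext u
      simp only [hedef, Set.indicator_apply, mem_setOf_eq, mem_Ioi, Pi.one_apply]
    have hIS : Ioi (F (q + t)) ∩ Ioo α 1 = Ioo (F (q + t)) 1 := by
      ext u
      simp only [mem_inter_iff, mem_Ioi, mem_Ioo]
      constructor
      · rintro ⟨h1, h2, h3⟩; exact ⟨h1, h3⟩
      · rintro ⟨h1, h2⟩; exact ⟨h1, lt_of_le_of_lt hqt h1, h2⟩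
    have hcompl : {ω | q + t < Y ω} = {ω | Y ω ≤ q + t}ᶜ := by
      ext ω; simp [not_le]
    have hle1 : P {ω | Y ω ≤ q + t} ≤ 1 := prob_le_one
    have hms : MeasurableSet {ω | Y ω ≤ q + t} := hYm measurableSet_Iic
    rw [h1, lintegral_indicator_one measurableSet_Ioi, hνα,
      Measure.restrict_apply measurableSet_Ioi, hIS, Real.volume_Ioo, hcompl,
      measure_compl hms (measure_ne_top _ _), measure_univ]
    have : (1:ℝ) - F (q + t) = ((1:ENNReal) - P {ω | Y ω ≤ q + t}).toReal := by
      rw [ENNReal.toReal_sub_of_le hle1 ENNReal.one_ne_top, ENNReal.toReal_one]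
    rw [this, ENNReal.ofReal_toReal]
    exact (lt_of_le_of_lt (tsub_le_self) ENNReal.one_lt_top).ne
  have L4 : ∫⁻ t in Ioi (0:ℝ), P {ω | q + t < Y ω} =
      ∫⁻ t in Ioi (0:ℝ), P {ω | t < max (Y ω - q) 0} := by
    refine setLIntegral_congr_fun measurableSet_Ioi (fun t ht => ?_)
    congr 1
    ext ω
    simp only [mem_setOf_eq, lt_max_iff]
    constructor
    · intro h; exact Or.inl (by linarith)
    · rintro (h | h)
      · linarith
      · exact absurd h (not_lt.2 ht.out.le)
  have hmax_meas : Measurable fun ω => max (Y ω - q) 0 :=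
    (hYm.sub measurable_const).max measurable_const
  have hmaxint : Integrable (fun ω => max (Y ω - q) 0) P :=
    (hY.sub (integrable_const q)).pos_part
  have L5 : ∫⁻ t in Ioi (0:ℝ), P {ω | t < max (Y ω - q) 0} =
      ∫⁻ ω, ENNReal.ofReal (max (Y ω - q) 0) ∂P :=
    (lintegral_eq_lintegral_meas_lt P (Eventually.of_forall fun ω => le_max_right _ _)
      hmax_meas.aemeasurable).symm
  have L6 : ∫⁻ ω, ENNReal.ofReal (max (Y ω - q) 0) ∂P = ENNReal.ofReal Ep :=
    (ofReal_integral_eq_lintegral_ofReal hmaxint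
      (Eventually.of_forall fun ω => le_max_right _ _)).symm
  have hφmeas : Measurable fun u => ∫⁻ t, e (u, t) ∂ν0 :=
    Measurable.lintegral_prod_right' (f := e) he_meas
  have hg_ae : AEMeasurable (fun u => g u - q) να := by
    refine (hφmeas.ennreal_toReal.aemeasurable).congr ?_
    refine (ae_restrict_iff' measurableSet_Ioo).2 (Eventually.of_forall fun u hu => ?_)
    show (∫⁻ t, e (u, t) ∂ν0).toReal = g u - q
    rw [L1 u hu, ENNReal.toReal_ofReal (sub_nonneg.2 (hgq u hu))]
  have hlint : ∫⁻ u, ENNReal.ofReal (g u - q) ∂να = ENNReal.ofReal Ep := by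
    have h0 : ∫⁻ u, ENNReal.ofReal (g u - q) ∂να = ∫⁻ u, (∫⁻ t, e (u, t) ∂ν0) ∂να := by
      refine setLIntegral_congr_fun measurableSet_Ioo (fun u hu => ?_)
      exact (L1 u hu).symm
    rw [h0, hswap]
    rw [setLIntegral_congr_fun measurableSet_Ioi L3, L4, L5, L6]
  have hnn : 0 ≤ᵐ[να] fun u => g u - q :=
    (ae_restrict_iff' measurableSet_Ioo).2 (Eventually.of_forall fun u hu =>
      sub_nonneg.2 (hgq u hu))
  have hEp_nn : 0 ≤ Ep := integral_nonneg fun ω => le_max_right _ _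
  have hre : ∫ u in Ioo α 1, (g u - q) = Ep := by
    rw [integral_eq_lintegral_of_nonneg_ae hnn hg_ae.aestronglyMeasurable, hlint,
      ENNReal.toReal_ofReal hEp_nn]
  have hint_g : Integrable (fun u => g u - q) να := by
    refine ⟨hg_ae.aestronglyMeasurable, ?_⟩
    rw [hasFiniteIntegral_iff_norm]
    have heq : (fun u => ENNReal.ofReal ‖g u - q‖) =ᵐ[να] fun u => ENNReal.ofReal (g u - q) := by
      filter_upwards [hnn] with u hu
      simp only [Pi.zero_apply] at hu
      rw [Real.norm_of_nonneg hu]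
    rw [lintegral_congr_ae heq, hlint]
    exact ENNReal.ofReal_lt_top
  have hIoo : ∫ u in Ioo α 1, g u = Ep + (1 - α) * q := by
    have h1 : ∀ u : ℝ, g u = (g u - q) + q := fun u => by ring
    calc ∫ u in Ioo α 1, g u = ∫ u in Ioo α 1, ((g u - q) + q) := by
          exact integral_congr_ae (Eventually.of_forall fun u => h1 u)
      _ = (∫ u in Ioo α 1, (g u - q)) + ∫ u in Ioo α 1, (q:ℝ) :=
          integral_add hint_g (integrable_const q)
      _ = Ep + (1 - α) * q := by
          rw [hre, integral_const, measureReal_restrict_apply_univ, measureReal_def, Real.volume_Ioo,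
            ENNReal.toReal_ofReal (by linarith : (0:ℝ) ≤ 1 - α), smul_eq_mul]
  have hInterval : ∫ u in α..1, VaR P Y u = Ep + (1 - α) * q := by
    rw [intervalIntegral.integral_of_le hα1.le, integral_Ioc_eq_integral_Ioo]
    exact hIoo
  have hCV : CVaR P Y α = (1 - α)⁻¹ * ∫ u in α..1, VaR P Y u := rfl
  rw [hCV, hInterval]
  have hne : (1:ℝ) - α ≠ 0 := by linarith
  field_simp
  ring
lemma FZ_quantile_score {Ω : Type*} [MeasurableSpace Ω] (P : Measure Ω) [IsProbabilityMeasure P]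
    (Y : Ω → ℝ) (hYm : Measurable Y) (H : ℝ → ℝ) (hH : Monotone H)
    (hHint : Integrable (fun ω => H (Y ω)) P) {α q : ℝ} (hq : IsQuantile P Y α q) (x : ℝ) :
    ∫ ω, ((if Y ω ≤ q then (1:ℝ) else 0) - α) * (H q - H (Y ω)) ∂P ≤
      ∫ ω, ((if Y ω ≤ x then (1:ℝ) else 0) - α) * (H x - H (Y ω)) ∂P := by
  have hmeasle : ∀ z : ℝ, MeasurableSet {ω | Y ω ≤ z} := fun z => hYm measurableSet_Iic
  set EH : ℝ := ∫ ω, H (Y ω) ∂P with hEH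
  set Fc : ℝ → ℝ := fun z => (P {ω | Y ω ≤ z}).toReal with hFc
  set J : ℝ → ℝ := fun z => ∫ ω, ({ω | Y ω ≤ z}).indicator (fun ω => H (Y ω)) ω ∂P with hJ
  have hJint : ∀ z : ℝ, Integrable (({ω | Y ω ≤ z}).indicator fun ω => H (Y ω)) P :=
    fun z => hHint.indicator (hmeasle z)
  have hΦ : ∀ z : ℝ, ∫ ω, ((if Y ω ≤ z then (1:ℝ) else 0) - α) * (H z - H (Y ω)) ∂P
      = Fc z * H z - J z - α * H z + α * EH := by
    intro z
    have hfun : (fun ω => ((if Y ω ≤ z then (1:ℝ) else 0) - α) * (H z - H (Y ω)))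
        = fun ω => (({ω | Y ω ≤ z}).indicator (fun _ => H z) ω
            - ({ω | Y ω ≤ z}).indicator (fun ω => H (Y ω)) ω)
            + (α * H (Y ω) - α * H z) := by
      funext ω
      by_cases h : Y ω ≤ z <;> simp [Set.indicator_apply, h] <;> ring
    have hi1 : Integrable (fun ω => ({ω | Y ω ≤ z}).indicator (fun _ => H z) ω) P :=
      (integrable_const (H z)).indicator (hmeasle z)
    have hi2 : Integrable (fun ω => ({ω | Y ω ≤ z}).indicator (fun ω => H (Y ω)) ω) P := hJint z
    have hi3 : Integrable (fun ω => α * H (Y ω)) P := hHint.const_mul α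
    have hi12 : Integrable (fun ω => ({ω | Y ω ≤ z}).indicator (fun _ => H z) ω
        - ({ω | Y ω ≤ z}).indicator (fun ω => H (Y ω)) ω) P := hi1.sub hi2
    have hi34 : Integrable (fun ω => α * H (Y ω) - α * H z) P :=
      hi3.sub (integrable_const (α * H z))
    rw [hfun, integral_add hi12 hi34, integral_sub hi1 hi2,
      integral_sub hi3 (integrable_const (α * H z)),
      integral_indicator_const _ (hmeasle z), integral_const, integral_const_mul]
    simp only [probReal_univ, measureReal_def, measure_univ, ENNReal.toReal_one, smul_eq_mul, one_mul]
    ring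
  rw [hΦ q, hΦ x]
  rcases le_or_gt q x with hqx | hxq
  · -- case q ≤ x
    set mid := {ω | q < Y ω ∧ Y ω ≤ x} with hmid
    have hmeasmid : MeasurableSet mid := hYm measurableSet_Ioc
    have hdisj : Disjoint {ω | Y ω ≤ q} mid := by
      rw [Set.disjoint_left]
      rintro ω h1 ⟨h2, _⟩
      exact absurd h1 (not_le.2 h2)
    have hsplit : {ω | Y ω ≤ x} = {ω | Y ω ≤ q} ∪ mid := by
      ext ω
      simp only [mem_setOf_eq, mem_union, hmid]
      constructor
      · intro h
        rcases le_or_gt (Y ω) q with h' | h'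
        · exact Or.inl h'
        · exact Or.inr ⟨h', h⟩
      · rintro (h | ⟨_, h⟩)
        · exact h.trans hqx
        · exact h
    have hFsplit : Fc x = Fc q + (P mid).toReal := by
      rw [hFc]
      simp only
      rw [hsplit, measure_union hdisj hmeasmid,
        ENNReal.toReal_add (measure_ne_top _ _) (measure_ne_top _ _)]
    have hJsplit : J x = J q + ∫ ω, mid.indicator (fun ω => H (Y ω)) ω ∂P := by
      rw [hJ]
      simp only
      rw [hsplit, ← integral_add (hJint q) (hHint.indicator hmeasmid)]
      congr 1
      funext ω
      rw [Set.indicator_union_of_disjoint hdisj]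
    have hbound : ∫ ω, mid.indicator (fun ω => H (Y ω)) ω ∂P ≤ (P mid).toReal * H x := by
      have hb : ∀ ω, mid.indicator (fun ω => H (Y ω)) ω ≤ mid.indicator (fun _ => H x) ω := by
        intro ω
        by_cases h : ω ∈ mid
        · simp only [Set.indicator_of_mem h]
          exact hH h.2
        · simp [Set.indicator_of_notMem h]
      calc ∫ ω, mid.indicator (fun ω => H (Y ω)) ω ∂P
          ≤ ∫ ω, mid.indicator (fun _ => H x) ω ∂P :=
            integral_mono (hHint.indicator hmeasmid)
              ((integrable_const (H x)).indicator hmeasmid) hb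
        _ = (P mid).toReal * H x := by
            rw [integral_indicator_const _ hmeasmid, smul_eq_mul, measureReal_def]
    have h1 : α ≤ Fc q := hq.2
    have h2 : H q ≤ H x := hH hqx
    have hFx : Fc x * H x = Fc q * H x + (P mid).toReal * H x := by rw [hFsplit]; ring
    nlinarith [mul_nonneg (sub_nonneg.2 h1) (sub_nonneg.2 h2), hbound, hFx, hJsplit]
  · -- case x < q
    set mid1 := {ω | x < Y ω ∧ Y ω < q} with hmid1
    set atq := {ω | Y ω = q} with hatq
    have hmeasmid1 : MeasurableSet mid1 := hYm measurableSet_Ioo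
    have hmeasatq : MeasurableSet atq := hYm (measurableSet_singleton q)
    have hmeaslt : MeasurableSet {ω | Y ω < q} := hYm measurableSet_Iio
    set L : ℝ := (P {ω | Y ω < q}).toReal with hL
    set A : ℝ := (P atq).toReal with hA
    -- F q = L + A
    have hdisj1 : Disjoint {ω | Y ω < q} atq := by
      rw [Set.disjoint_left]
      intro ω h1 h2
      exact absurd h2 (ne_of_lt h1)
    have hsplitq : {ω | Y ω ≤ q} = {ω | Y ω < q} ∪ atq := by
      ext ω
      simp only [mem_setOf_eq, mem_union, hatq]
      exact le_iff_lt_or_eq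
    have hFq : Fc q = L + A := by
      rw [hFc]; simp only
      rw [hsplitq, measure_union hdisj1 hmeasatq,
        ENNReal.toReal_add (measure_ne_top _ _) (measure_ne_top _ _)]
    -- L = F x + P mid1
    have hdisj2 : Disjoint {ω | Y ω ≤ x} mid1 := by
      rw [Set.disjoint_left]
      rintro ω h1 ⟨h2, _⟩
      exact absurd h1 (not_le.2 h2)
    have hsplitlt : {ω | Y ω < q} = {ω | Y ω ≤ x} ∪ mid1 := by
      ext ω
      simp only [mem_setOf_eq, mem_union, hmid1]
      constructor
      · intro h
        rcases le_or_gt (Y ω) x with h' | h'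
        · exact Or.inl h'
        · exact Or.inr ⟨h', h⟩
      · rintro (h | ⟨_, h⟩)
        · exact lt_of_le_of_lt h hxq
        · exact h
    have hLsplit : L = Fc x + (P mid1).toReal := by
      rw [hL, hFc]; simp only
      rw [hsplitlt, measure_union hdisj2 hmeasmid1,
        ENNReal.toReal_add (measure_ne_top _ _) (measure_ne_top _ _)]
    -- J q = J x + ∫ mid1 + ∫ atq
    have hdisjmid : Disjoint {ω | Y ω ≤ x} (mid1 ∪ atq) := by
      rw [Set.disjoint_left]
      rintro ω h1 (⟨h2, _⟩ | h2)
      · exact absurd h1 (not_le.2 h2)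
      · have h1' : Y ω ≤ x := h1
        have h2' : Y ω = q := h2
        rw [h2'] at h1'
        exact absurd hxq (not_lt.2 h1')
    have hdisj3 : Disjoint mid1 atq := by
      rw [Set.disjoint_left]
      rintro ω ⟨_, h1⟩ h2
      rw [mem_setOf_eq] at h2
      exact absurd h2 (ne_of_lt h1)
    have hsplitJ : {ω | Y ω ≤ q} = {ω | Y ω ≤ x} ∪ (mid1 ∪ atq) := by
      rw [hsplitq, hsplitlt, union_assoc]
    have hJq : J q = J x + ((∫ ω, mid1.indicator (fun ω => H (Y ω)) ω ∂P)
        + ∫ ω, atq.indicator (fun ω => H (Y ω)) ω ∂P) := by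
      have hm1 : Integrable (fun ω => mid1.indicator (fun ω => H (Y ω)) ω) P :=
        hHint.indicator hmeasmid1
      have hmA : Integrable (fun ω => atq.indicator (fun ω => H (Y ω)) ω) P :=
        hHint.indicator hmeasatq
      have hmx : Integrable (fun ω => ({ω | Y ω ≤ x}).indicator (fun ω => H (Y ω)) ω) P :=
        hHint.indicator (hmeasle x)
      have hm1A : Integrable (fun ω => mid1.indicator (fun ω => H (Y ω)) ω
          + atq.indicator (fun ω => H (Y ω)) ω) P := hm1.add hmA
      rw [hJ]; simp only
      rw [hsplitJ, ← integral_add hm1 hmA, ← integral_add hmx hm1A]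
      congr 1
      funext ω
      rw [Set.indicator_union_of_disjoint hdisjmid, Set.indicator_union_of_disjoint hdisj3]
    have hatqval : ∫ ω, atq.indicator (fun ω => H (Y ω)) ω ∂P = A * H q := by
      have : (fun ω => atq.indicator (fun ω => H (Y ω)) ω) = fun ω => atq.indicator (fun _ => H q) ω := by
        funext ω
        by_cases h : ω ∈ atq
        · rw [Set.indicator_of_mem h, Set.indicator_of_mem h]
          exact congrArg H h
        · rw [Set.indicator_of_notMem h, Set.indicator_of_notMem h]
      rw [this, integral_indicator_const _ hmeasatq, smul_eq_mul, hA, measureReal_def]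
    have hmid1bound : (P mid1).toReal * H x ≤ ∫ ω, mid1.indicator (fun ω => H (Y ω)) ω ∂P := by
      have hb : ∀ ω, mid1.indicator (fun _ => H x) ω ≤ mid1.indicator (fun ω => H (Y ω)) ω := by
        intro ω
        by_cases h : ω ∈ mid1
        · simp only [Set.indicator_of_mem h]
          exact hH h.1.le
        · simp [Set.indicator_of_notMem h]
      calc (P mid1).toReal * H x = ∫ ω, mid1.indicator (fun _ => H x) ω ∂P := by
            rw [integral_indicator_const _ hmeasmid1, smul_eq_mul, measureReal_def]
        _ ≤ _ := integral_mono ((integrable_const (H x)).indicator hmeasmid1)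
            (hHint.indicator hmeasmid1) hb
    have h1 : L ≤ α := hq.1
    have h2 : H x ≤ H q := hH hxq.le
    have hFqHq : Fc q * H q = L * H q + A * H q := by rw [hFq]; ring
    have hLHx : L * H x = Fc x * H x + (P mid1).toReal * H x := by rw [hLsplit]; ring
    nlinarith [mul_nonneg (sub_nonneg.2 h1) (sub_nonneg.2 h2), hmid1bound, hatqval, hJq,
      hFqHq, hLHx]
lemma FZ_ind_meas {Ω : Type*} [MeasurableSpace Ω] {Y : Ω → ℝ} (hYm : Measurable Y) (z : ℝ) :
    Measurable (fun ω => if Y ω ≤ z then (1:ℝ) else 0) :=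
  Measurable.ite (hYm measurableSet_Iic) measurable_const measurable_const

lemma FZ_ind_meas' {Ω : Type*} [MeasurableSpace Ω] {Y : Ω → ℝ} (hYm : Measurable Y) (z : ℝ) :
    Measurable (fun ω => if z < Y ω then (1:ℝ) else 0) :=
  Measurable.ite (hYm measurableSet_Ioi) measurable_const measurable_const

lemma FZ_int1 {Ω : Type*} [MeasurableSpace Ω] (P : Measure Ω) [IsProbabilityMeasure P]
    {Y : Ω → ℝ} (hYm : Measurable Y) {g : ℝ → ℝ} (hg : Integrable (fun ω => g (Y ω)) P)
    (z α C : ℝ) :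
    Integrable (fun ω => ((if Y ω ≤ z then (1:ℝ) else 0) - α) * (C - g (Y ω))) P := by
  refine Integrable.bdd_mul ((integrable_const C).sub hg)
    (((FZ_ind_meas hYm z).sub measurable_const).aestronglyMeasurable) (c := 1 + |α|) (ae_of_all _ fun ω => ?_)
  by_cases h : Y ω ≤ z
  · rw [if_pos h]
    refine (norm_sub_le _ _).trans ?_
    simp [Real.norm_eq_abs]
  · rw [if_neg h, zero_sub, norm_neg]
    have : ‖α‖ = |α| := rfl
    rw [this]
    linarith [abs_nonneg α]

lemma FZ_int2 {Ω : Type*} [MeasurableSpace Ω] (P : Measure Ω) [IsProbabilityMeasure P]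
    {Y : Ω → ℝ} (hYm : Measurable Y) (hY : Integrable Y P) (z β : ℝ) :
    Integrable (fun ω => ((if z < Y ω then (1:ℝ) else 0) - β) * z
      - (if z < Y ω then (1:ℝ) else 0) * Y ω) P := by
  have h1 : Integrable (fun ω => ((if z < Y ω then (1:ℝ) else 0) - β) * z) P := by
    refine Integrable.bdd_mul (integrable_const z)
      (((FZ_ind_meas' hYm z).sub measurable_const).aestronglyMeasurable) (c := 1 + |β|) (ae_of_all _ fun ω => ?_)
    by_cases h : z < Y ω
    · rw [if_pos h]
      refine (norm_sub_le _ _).trans ?_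
      simp [Real.norm_eq_abs]
    · rw [if_neg h, zero_sub, norm_neg]
      have : ‖β‖ = |β| := rfl
      rw [this]
      linarith [abs_nonneg β]
  have h2 : Integrable (fun ω => (if z < Y ω then (1:ℝ) else 0) * Y ω) P := by
    refine Integrable.bdd_mul hY ((FZ_ind_meas' hYm z).aestronglyMeasurable) (c := 1) (ae_of_all _ fun ω => ?_)
    by_cases h : z < Y ω <;> simp [h]
  exact h1.sub h2

lemma FZ_key {Ω : Type*} [MeasurableSpace Ω] (P : Measure Ω) [IsProbabilityMeasure P]
    (Y : Ω → ℝ) (hYm : Measurable Y) (hY : Integrable Y P) (g : ℝ → ℝ) (c α q x : ℝ)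
    (hg : Integrable (fun ω => g (Y ω)) P)
    (hmono : Monotone fun t => g t - t * c)
    (hq : IsQuantile P Y α q) :
    (∫ ω, ((if Y ω ≤ q then (1:ℝ) else 0) - α) * (g q - g (Y ω)) ∂P)
      + c * ∫ ω, ((if q < Y ω then (1:ℝ) else 0) - (1 - α)) * q
          - (if q < Y ω then (1:ℝ) else 0) * Y ω ∂P
    ≤ (∫ ω, ((if Y ω ≤ x then (1:ℝ) else 0) - α) * (g x - g (Y ω)) ∂P)
      + c * ∫ ω, ((if x < Y ω then (1:ℝ) else 0) - (1 - α)) * x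
          - (if x < Y ω then (1:ℝ) else 0) * Y ω ∂P := by
  have hHint : Integrable (fun ω => g (Y ω) - Y ω * c) P := hg.sub (hY.mul_const c)
  have hid : ∀ z : ℝ,
      (∫ ω, ((if Y ω ≤ z then (1:ℝ) else 0) - α) * (g z - g (Y ω)) ∂P)
        + c * ∫ ω, ((if z < Y ω then (1:ℝ) else 0) - (1 - α)) * z
            - (if z < Y ω then (1:ℝ) else 0) * Y ω ∂P
      = (∫ ω, ((if Y ω ≤ z then (1:ℝ) else 0) - α) * ((g z - z * c) - (g (Y ω) - Y ω * c)) ∂P)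
        - c * ((1 - α) * ∫ ω, Y ω ∂P) := by
    intro z
    have hf1 : Integrable (fun ω => ((if Y ω ≤ z then (1:ℝ) else 0) - α) * (g z - g (Y ω))) P :=
      FZ_int1 P hYm hg z α (g z)
    have hf2 : Integrable (fun ω => ((if z < Y ω then (1:ℝ) else 0) - (1 - α)) * z
        - (if z < Y ω then (1:ℝ) else 0) * Y ω) P := FZ_int2 P hYm hY z (1 - α)
    have hpt : (fun ω => ((if Y ω ≤ z then (1:ℝ) else 0) - α)
          * ((g z - z * c) - (g (Y ω) - Y ω * c)))
        = fun ω => (((if Y ω ≤ z then (1:ℝ) else 0) - α) * (g z - g (Y ω))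
          + c * (((if z < Y ω then (1:ℝ) else 0) - (1 - α)) * z
            - (if z < Y ω then (1:ℝ) else 0) * Y ω))
          + c * ((1 - α) * Y ω) := by
      funext ω
      by_cases h : Y ω ≤ z
      · rw [if_pos h, if_neg (not_lt.2 h)]; ring
      · rw [if_neg h, if_pos (not_le.1 h)]; ring
    have h12 : Integrable (fun ω => ((if Y ω ≤ z then (1:ℝ) else 0) - α) * (g z - g (Y ω))
        + c * (((if z < Y ω then (1:ℝ) else 0) - (1 - α)) * z
          - (if z < Y ω then (1:ℝ) else 0) * Y ω)) P := hf1.add (hf2.const_mul c)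
    have h3 : Integrable (fun ω => c * ((1 - α) * Y ω)) P := (hY.const_mul (1 - α)).const_mul c
    have hcalc : ∫ ω, ((if Y ω ≤ z then (1:ℝ) else 0) - α)
          * ((g z - z * c) - (g (Y ω) - Y ω * c)) ∂P
        = ((∫ ω, ((if Y ω ≤ z then (1:ℝ) else 0) - α) * (g z - g (Y ω)) ∂P)
          + c * ∫ ω, ((if z < Y ω then (1:ℝ) else 0) - (1 - α)) * z
              - (if z < Y ω then (1:ℝ) else 0) * Y ω ∂P)
          + c * ((1 - α) * ∫ ω, Y ω ∂P) := by
      rw [hpt, integral_add h12 h3, integral_add hf1 (hf2.const_mul c), integral_const_mul,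
        integral_const_mul, integral_const_mul]
    linarith [hcalc]
  rw [hid q, hid x]
  have hscore := FZ_quantile_score P Y hYm (fun t => g t - t * c) hmono hHint hq x
  exact sub_le_sub_right hscore _
lemma FZ_Tval {Ω : Type*} [MeasurableSpace Ω] (P : Measure Ω) [IsProbabilityMeasure P]
    (Y : Ω → ℝ) (hYm : Measurable Y) (hY : Integrable Y P) {α q : ℝ} (p' : ℝ)
    (hα0 : 0 < α) (hα1 : α < 1) (hq : IsQuantile P Y α q)
    (huniq : ∀ r, IsQuantile P Y α r → r = q) :
    p' / (1 - α) * (∫ ω, ((if q < Y ω then (1:ℝ) else 0) - (1 - α)) * q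
        - (if q < Y ω then (1:ℝ) else 0) * Y ω ∂P)
      = -(p' * CVaR P Y α) := by
  have hC := FZ_CVaR_eq P Y hYm hY hα0 hα1 hq huniq
  have hmeas : MeasurableSet {ω | q < Y ω} := hYm measurableSet_Ioi
  have hB : Integrable (fun ω => (if q < Y ω then (1:ℝ) else 0) * Y ω) P := by
    refine Integrable.bdd_mul hY ((FZ_ind_meas' hYm q).aestronglyMeasurable) (c := 1) (ae_of_all _ fun ω => ?_)
    by_cases h : q < Y ω <;> simp [h]
  have hIq : Integrable (fun ω => ((if q < Y ω then (1:ℝ) else 0) - (1 - α)) * q) P := by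
    refine Integrable.bdd_mul (integrable_const q)
      (((FZ_ind_meas' hYm q).sub measurable_const).aestronglyMeasurable)
      (c := 1 + |1 - α|) (ae_of_all _ fun ω => ?_)
    by_cases h : q < Y ω
    · rw [if_pos h]
      refine (norm_sub_le _ _).trans ?_
      simp [Real.norm_eq_abs]
    · rw [if_neg h, zero_sub, norm_neg]
      have : ‖1 - α‖ = |1 - α| := rfl
      rw [this]
      linarith [abs_nonneg (1 - α)]
  have hIqval : ∫ ω, ((if q < Y ω then (1:ℝ) else 0) - (1 - α)) * q ∂P
      = ((P {ω | q < Y ω}).toReal - (1 - α)) * q := by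
    have hfe : (fun ω => ((if q < Y ω then (1:ℝ) else 0) - (1 - α)) * q)
        = fun ω => ({ω | q < Y ω}).indicator (fun _ => q) ω - (1 - α) * q := by
      funext ω
      by_cases h : q < Y ω <;> simp [Set.indicator_apply, h] <;> ring
    rw [hfe, integral_sub ((integrable_const q).indicator hmeas) (integrable_const _),
      integral_indicator_const _ hmeas, integral_const]
    simp only [probReal_univ, measureReal_def, measure_univ, ENNReal.toReal_one, smul_eq_mul, one_mul]
    ring
  have hT : ∫ ω, ((if q < Y ω then (1:ℝ) else 0) - (1 - α)) * q
      - (if q < Y ω then (1:ℝ) else 0) * Y ω ∂P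
      = ((P {ω | q < Y ω}).toReal - (1 - α)) * q
        - ∫ ω, (if q < Y ω then (1:ℝ) else 0) * Y ω ∂P := by
    rw [integral_sub hIq hB, hIqval]
  have hEp : ∫ ω, max (Y ω - q) 0 ∂P
      = (∫ ω, (if q < Y ω then (1:ℝ) else 0) * Y ω ∂P) - (P {ω | q < Y ω}).toReal * q := by
    have hfe : (fun ω => max (Y ω - q) 0)
        = fun ω => (if q < Y ω then (1:ℝ) else 0) * Y ω
          - ({ω | q < Y ω}).indicator (fun _ => q) ω := by
      funext ω
      by_cases h : q < Y ω
      · rw [max_eq_left (sub_nonneg.2 h.le)]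
        simp [Set.indicator_apply, h]
      · rw [max_eq_right (sub_nonpos.2 (not_lt.1 h))]
        simp [Set.indicator_apply, h]
    rw [hfe, integral_sub hB ((integrable_const q).indicator hmeas),
      integral_indicator_const _ hmeas, smul_eq_mul, measureReal_def]
  rw [hT, hC, hEp]
  have h1a : (1:ℝ) - α ≠ 0 := by linarith
  field_simp
  ring
/-- Fissler–Ziegel scoring functions for spectral risk measures with finitely supported
spectrum: consistency for `(VaR_{α₁}, …, VaR_{α_{k−1}}, ρ^φ)`. -/
theorem spectral_score_consistent {Ω : Type*} [MeasurableSpace Ω] (P : Measure Ω)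
    [IsProbabilityMeasure P] (k : ℕ) (hk : 2 ≤ k)
    (α p : ℕ → ℝ)
    (hα0 : 0 < α 1) (hα1 : α (k - 1) < 1)
    (hαmono : ∀ m : ℕ, 1 ≤ m → m + 1 ≤ k - 1 → α m < α (m + 1))
    (hp : ∀ m ∈ Finset.Icc 1 (k - 1), p m ∈ Set.Ioc (0:ℝ) 1)
    (hpsum : ∑ m ∈ Finset.Icc 1 (k - 1), p m = 1)
    (Y : Ω → ℝ) (hYm : Measurable Y) (hY : Integrable Y P)
    (huniq : ∀ m ∈ Finset.Icc 1 (k - 1), ∃! q : ℝ, IsQuantile P Y (α m) q)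
    (G : ℕ → ℝ → ℝ) (Gk' : ℝ → ℝ)
    -- G k is convex with subgradient Gk'
    (hGk : ∀ x y : ℝ, G k x + Gk' x * (y - x) ≤ G k y)
    -- for every 𝔞_k and each m, the map x ↦ G_m(x) − (x p_m/(1−α_m)) G_k'(𝔞_k) is increasing
    (hGm : ∀ ak : ℝ, ∀ m ∈ Finset.Icc 1 (k - 1),
      Monotone (fun x => G m x - x * p m / (1 - α m) * Gk' ak))
    (hGint : ∀ m ∈ Finset.Icc 1 k, Integrable (fun ω => G m (Y ω)) P)
    (S : (ℕ → ℝ) → ℝ → ℝ)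
    (hS : ∀ (a : ℕ → ℝ) (y : ℝ), S a y =
      (∑ m ∈ Finset.Icc 1 (k - 1),
        ((if y ≤ a m then (1:ℝ) else 0) - α m) * (G m (a m) - G m y))
      - G k (a k) + G k y
      + Gk' (a k) * (a k + ∑ m ∈ Finset.Icc 1 (k - 1),
          p m / (1 - α m) * (((if a m < y then (1:ℝ) else 0) - (1 - α m)) * a m
            - (if a m < y then (1:ℝ) else 0) * y)))
    (M : ℕ → ℝ)
    (hMvar : ∀ m ∈ Finset.Icc 1 (k - 1), M m = VaR P Y (α m))
    (hMspec : M k = ∑ m ∈ Finset.Icc 1 (k - 1), p m * CVaR P Y (α m)) :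
    ∀ a : ℕ → ℝ, (∀ m : ℕ, 1 ≤ m → m + 1 ≤ k - 1 → a m ≤ a (m + 1)) →
      ∫ ω, S M (Y ω) ∂P ≤ ∫ ω, S a (Y ω) ∂P := by
  intro a _
  set K := Finset.Icc 1 (k - 1) with hKdef
  have hmem : ∀ m ∈ K, 1 ≤ m ∧ m ≤ k - 1 := fun m hm => Finset.mem_Icc.1 hm
  have hKk : ∀ m ∈ K, m ∈ Finset.Icc 1 k := fun m hm =>
    Finset.mem_Icc.2 ⟨(hmem m hm).1, le_trans (hmem m hm).2 (Nat.sub_le k 1)⟩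
  have hchain : ∀ i j : ℕ, 1 ≤ i → i ≤ j → j ≤ k - 1 → α i ≤ α j := by
    intro i j hi hij hjk
    induction j, hij using Nat.le_induction with
    | base => exact le_rfl
    | succ j hj ih =>
      have hj1 : j ≤ k - 1 := le_trans (Nat.le_succ j) hjk
      exact le_trans (ih hj1) (hαmono j (le_trans hi hj) hjk).le
  have hα01 : ∀ m ∈ K, 0 < α m ∧ α m < 1 := by
    intro m hm
    obtain ⟨hm1, hm2⟩ := hmem m hm
    exact ⟨lt_of_lt_of_le hα0 (hchain 1 m le_rfl hm1 hm2),
      lt_of_le_of_lt (hchain m (k - 1) hm1 hm2 le_rfl) hα1⟩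
  have hquant : ∀ m ∈ K, IsQuantile P Y (α m) (M m)
      ∧ ∀ r, IsQuantile P Y (α m) r → r = M m := by
    intro m hm
    obtain ⟨qm, hqm, huq⟩ := huniq m hm
    have huniq' : ∀ r, IsQuantile P Y (α m) r → r = qm := fun r hr => huq r hr
    have hMm : M m = qm := by rw [hMvar m hm]; exact FZ_VaR_eq P Y hqm huniq'
    refine ⟨by rw [hMm]; exact hqm, fun r hr => by rw [hMm]; exact huniq' r hr⟩
  -- expected score formula
  have hES : ∀ v : ℕ → ℝ,
      ∫ ω, S v (Y ω) ∂P
        = (∑ m ∈ K, ∫ ω, ((if Y ω ≤ v m then (1:ℝ) else 0) - α m)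
              * (G m (v m) - G m (Y ω)) ∂P)
          + Gk' (v k) * (∑ m ∈ K, p m / (1 - α m) *
              ∫ ω, ((if v m < Y ω then (1:ℝ) else 0) - (1 - α m)) * v m
                - (if v m < Y ω then (1:ℝ) else 0) * Y ω ∂P)
          + ((∫ ω, G k (Y ω) ∂P) + Gk' (v k) * v k - G k (v k)) := by
    intro v
    have hint1 : ∀ m ∈ K, Integrable (fun ω => ((if Y ω ≤ v m then (1:ℝ) else 0) - α m)
        * (G m (v m) - G m (Y ω))) P :=
      fun m hm => FZ_int1 P hYm (hGint m (hKk m hm)) (v m) (α m) (G m (v m))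
    have hint2 : ∀ m ∈ K, Integrable (fun ω => p m / (1 - α m)
        * (((if v m < Y ω then (1:ℝ) else 0) - (1 - α m)) * v m
          - (if v m < Y ω then (1:ℝ) else 0) * Y ω)) P :=
      fun m _ => (FZ_int2 P hYm hY (v m) (1 - α m)).const_mul _
    have hsum1 : Integrable (fun ω => ∑ m ∈ K, ((if Y ω ≤ v m then (1:ℝ) else 0) - α m)
        * (G m (v m) - G m (Y ω))) P := integrable_finset_sum K hint1
    have hsum2 : Integrable (fun ω => ∑ m ∈ K, p m / (1 - α m)
        * (((if v m < Y ω then (1:ℝ) else 0) - (1 - α m)) * v m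
          - (if v m < Y ω then (1:ℝ) else 0) * Y ω)) P := integrable_finset_sum K hint2
    have hGkY : Integrable (fun ω => G k (Y ω)) P :=
      hGint k (Finset.mem_Icc.2 ⟨by omega, le_rfl⟩)
    have hA : Integrable (fun ω =>
        (∑ m ∈ K, ((if Y ω ≤ v m then (1:ℝ) else 0) - α m) * (G m (v m) - G m (Y ω)))
        + Gk' (v k) * (∑ m ∈ K, p m / (1 - α m)
          * (((if v m < Y ω then (1:ℝ) else 0) - (1 - α m)) * v m
            - (if v m < Y ω then (1:ℝ) else 0) * Y ω))) P := hsum1.add (hsum2.const_mul _)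
    have hB : Integrable (fun ω => G k (Y ω) + (Gk' (v k) * v k - G k (v k))) P :=
      hGkY.add (integrable_const _)
    have hfun : (fun ω => S v (Y ω)) = fun ω =>
        ((∑ m ∈ K, ((if Y ω ≤ v m then (1:ℝ) else 0) - α m) * (G m (v m) - G m (Y ω)))
          + Gk' (v k) * (∑ m ∈ K, p m / (1 - α m)
            * (((if v m < Y ω then (1:ℝ) else 0) - (1 - α m)) * v m
              - (if v m < Y ω then (1:ℝ) else 0) * Y ω)))
        + (G k (Y ω) + (Gk' (v k) * v k - G k (v k))) := by
      funext ω
      rw [hS v (Y ω)]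
      ring
    rw [hfun, integral_add hA hB, integral_add hsum1 (hsum2.const_mul _), integral_const_mul,
      integral_add hGkY (integrable_const _), integral_const,
      integral_finset_sum K hint1, integral_finset_sum K hint2]
    have hcm : ∑ m ∈ K, ∫ ω, p m / (1 - α m)
          * (((if v m < Y ω then (1:ℝ) else 0) - (1 - α m)) * v m
            - (if v m < Y ω then (1:ℝ) else 0) * Y ω) ∂P
        = ∑ m ∈ K, p m / (1 - α m)
          * ∫ ω, ((if v m < Y ω then (1:ℝ) else 0) - (1 - α m)) * v m
            - (if v m < Y ω then (1:ℝ) else 0) * Y ω ∂P :=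
      Finset.sum_congr rfl fun m _ => integral_const_mul _ _
    rw [hcm]
    simp only [probReal_univ, measureReal_def, measure_univ, ENNReal.toReal_one, smul_eq_mul, one_mul]
    ring
  -- value of the T-sum at the optimum
  have hTM : ∀ m ∈ K, p m / (1 - α m)
      * (∫ ω, ((if M m < Y ω then (1:ℝ) else 0) - (1 - α m)) * M m
        - (if M m < Y ω then (1:ℝ) else 0) * Y ω ∂P) = -(p m * CVaR P Y (α m)) :=
    fun m hm => FZ_Tval P Y hYm hY (p m) (hα01 m hm).1 (hα01 m hm).2
      (hquant m hm).1 (hquant m hm).2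
  have hTsum : ∑ m ∈ K, p m / (1 - α m)
      * (∫ ω, ((if M m < Y ω then (1:ℝ) else 0) - (1 - α m)) * M m
        - (if M m < Y ω then (1:ℝ) else 0) * Y ω ∂P) = -(M k) := by
    calc ∑ m ∈ K, p m / (1 - α m)
        * (∫ ω, ((if M m < Y ω then (1:ℝ) else 0) - (1 - α m)) * M m
          - (if M m < Y ω then (1:ℝ) else 0) * Y ω ∂P)
        = ∑ m ∈ K, -(p m * CVaR P Y (α m)) := Finset.sum_congr rfl hTM
      _ = -∑ m ∈ K, p m * CVaR P Y (α m) := by rw [Finset.sum_neg_distrib]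
      _ = -(M k) := by rw [hMspec]
  -- per-coordinate comparison
  have hstep : ∀ m ∈ K,
      (∫ ω, ((if Y ω ≤ M m then (1:ℝ) else 0) - α m) * (G m (M m) - G m (Y ω)) ∂P)
        + (Gk' (a k) * (p m / (1 - α m)))
          * (∫ ω, ((if M m < Y ω then (1:ℝ) else 0) - (1 - α m)) * M m
            - (if M m < Y ω then (1:ℝ) else 0) * Y ω ∂P)
      ≤ (∫ ω, ((if Y ω ≤ a m then (1:ℝ) else 0) - α m) * (G m (a m) - G m (Y ω)) ∂P)
        + (Gk' (a k) * (p m / (1 - α m)))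
          * (∫ ω, ((if a m < Y ω then (1:ℝ) else 0) - (1 - α m)) * a m
            - (if a m < Y ω then (1:ℝ) else 0) * Y ω ∂P) := by
    intro m hm
    have hfe : (fun t => G m t - t * (Gk' (a k) * (p m / (1 - α m))))
        = fun t => G m t - t * p m / (1 - α m) * Gk' (a k) := funext fun t => by ring
    have hmono' : Monotone (fun t => G m t - t * (Gk' (a k) * (p m / (1 - α m)))) := by
      rw [hfe]; exact hGm (a k) m hm
    exact FZ_key P Y hYm hY (G m) (Gk' (a k) * (p m / (1 - α m))) (α m) (M m) (a m)
      (hGint m (hKk m hm)) hmono' (hquant m hm).1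
  have hsumle := Finset.sum_le_sum hstep
  rw [Finset.sum_add_distrib, Finset.sum_add_distrib] at hsumle
  have hfact : ∀ w : ℕ → ℝ, ∑ m ∈ K, (Gk' (a k) * (p m / (1 - α m)))
      * (∫ ω, ((if w m < Y ω then (1:ℝ) else 0) - (1 - α m)) * w m
        - (if w m < Y ω then (1:ℝ) else 0) * Y ω ∂P)
      = Gk' (a k) * ∑ m ∈ K, p m / (1 - α m)
        * (∫ ω, ((if w m < Y ω then (1:ℝ) else 0) - (1 - α m)) * w m
          - (if w m < Y ω then (1:ℝ) else 0) * Y ω ∂P) := by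
    intro w
    rw [Finset.mul_sum]
    exact Finset.sum_congr rfl fun m _ => by ring
  rw [hfact M, hfact a, hTsum] at hsumle
  have hconv := hGk (a k) (M k)
  rw [hES M, hES a, hTsum]
  linarith [hsumle, hconv]
end

section
/- Let k ≥ 2, let 0 < α₁ < α₂ < … < α_{k−1} < 1 and p₁, …, p_{k−1} ∈ (0,1] with Σ_{m=1}^{k−1} p_m = 1, and let Y be an integrable real-valued random variable having a unique α_m-quantile for each m = 1,…,k−1. Define the spectral risk measure ρ^φ(Y) := Σ_{m=1}^{k−1} p_m CVaR_{α_m}(Y). Let G_k : ℝ → ℝ be strictly convex with subgradient G_k′ and let G₁, …, G_{k−1} : ℝ → ℝ be such that for every 𝔞_k ∈ ℝ and each m = 1,…,k−1 the map x ↦ G_m(x) − (x p_m/(1−α_m)) G_k′(𝔞_k) is strictly increasing, and assume E|G_m(Y)| < ∞ for all m = 1,…,k. Define the scoring function S(𝔞₁, …, 𝔞_{k−1}, 𝔞_k, y) := Σ_{m=1}^{k−1} (1{y ≤ 𝔞_m} − α_m)(G_m(𝔞_m) − G_m(y)) − G_k(𝔞_k) + G_k(y) + G_k′(𝔞_k)[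 𝔞_k + Σ_{m=1}^{k−1} (p_m/(1−α_m))( (1{y > 𝔞_m} − (1−α_m)) 𝔞_m − 1{y > 𝔞_m} y ) ]. Then S is strictly consistent for the mapping M(Y) = (VaR_{α₁}(Y), …, VaR_{α_{k−1}}(Y), ρ^φ(Y)): for every 𝔞 ∈ ℝ^k with 𝔞₁ ≤ … ≤ 𝔞_{k−1} and 𝔞 ≠ M(Y), one has E[S(M(Y), Y)] < E[S(𝔞₁, …, 𝔞_k, Y)]. -/
open MeasureTheory Set
set_option linter.unusedSectionVars false
set_option linter.unusedVariables false

namespace SpectralAux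
variable {Ω : Type*} [MeasurableSpace Ω] (P : Measure Ω) [IsProbabilityMeasure P] (Y : Ω → ℝ)

/-- The cdf of `Y` under `P`. -/
noncomputable def F (x : ℝ) : ℝ := (P {ω | Y ω ≤ x}).toReal

variable {P Y}

lemma F_mono : Monotone (F P Y) := by
  intro x y hxy
  exact ENNReal.toReal_mono (measure_ne_top _ _)
    (measure_mono (fun ω (h : Y ω ≤ x) => le_trans h hxy))

lemma F_nonneg (x : ℝ) : 0 ≤ F P Y x := ENNReal.toReal_nonneg

lemma F_le_one (x : ℝ) : F P Y x ≤ 1 := by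
  have := measure_mono (μ := P) (subset_univ {ω | Y ω ≤ x})
  simpa [F, measure_univ] using ENNReal.toReal_mono (by simp) this

lemma toReal_lt_toReal_of_lt {a b : ENNReal} (hb : b ≠ ⊤) (h : a < b) :
    a.toReal < b.toReal :=
  ENNReal.toReal_strict_mono hb h

variable (hYm : Measurable Y)
include hYm

lemma exists_F_lt {u : ℝ} (hu : 0 < u) : ∃ x : ℝ, F P Y x < u := by
  have hA : Antitone (fun n : ℕ => {ω | Y ω ≤ -(n:ℝ)}) := by
    intro m n hmn ω (h : Y ω ≤ -(n:ℝ))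
    exact le_trans h (by exact_mod_cast neg_le_neg (Nat.cast_le.2 hmn))
  have hI : (⋂ n : ℕ, {ω | Y ω ≤ -(n:ℝ)}) = (∅ : Set Ω) := by
    ext ω
    simp only [mem_iInter, mem_setOf_eq, mem_empty_iff_false, iff_false, not_forall, not_le]
    obtain ⟨n, hn⟩ := exists_nat_gt (-(Y ω))
    exact ⟨n, by linarith⟩
  have ht := tendsto_measure_iInter_atTop (μ := P)
    (fun n => (hYm measurableSet_Iic).nullMeasurableSet) hA ⟨0, measure_ne_top _ _⟩
  have hI' : (⋂ n : ℕ, Y ⁻¹' Iic (-(n:ℝ))) = (∅ : Set Ω) := hI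
  rw [hI'] at ht
  have ht' : Filter.Tendsto (fun n : ℕ => P {ω | Y ω ≤ -(n:ℝ)}) Filter.atTop (nhds 0) := by
    rw [measure_empty] at ht
    exact ht
  have h3 : ∀ᶠ n : ℕ in Filter.atTop, P {ω | Y ω ≤ -(n:ℝ)} < ENNReal.ofReal u :=
    ht' (Iio_mem_nhds (show (0:ENNReal) < ENNReal.ofReal u by simpa using hu))
  obtain ⟨n, hn⟩ := (Filter.eventually_atTop).1 h3
  refine ⟨-(n:ℝ), ?_⟩
  have h2 := hn n le_rfl
  have : P {ω | Y ω ≤ -(n:ℝ)} < ENNReal.ofReal u := h2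
  calc F P Y (-(n:ℝ)) < (ENNReal.ofReal u).toReal :=
        toReal_lt_toReal_of_lt ENNReal.ofReal_ne_top this
    _ = u := ENNReal.toReal_ofReal hu.le

lemma exists_le_F {u : ℝ} (hu : u < 1) : ∃ x : ℝ, u ≤ F P Y x := by
  have hM : Monotone (fun n : ℕ => {ω | Y ω ≤ (n:ℝ)}) := by
    intro m n hmn ω (h : Y ω ≤ (m:ℝ))
    exact le_trans h (by exact_mod_cast hmn)
  have hI : (⋃ n : ℕ, {ω | Y ω ≤ (n:ℝ)}) = (univ : Set Ω) := by
    ext ω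
    simp only [mem_iUnion, mem_setOf_eq, mem_univ, iff_true]
    obtain ⟨n, hn⟩ := exists_nat_gt (Y ω)
    exact ⟨n, hn.le⟩
  have ht := tendsto_measure_iUnion_atTop (μ := P) hM
  rw [hI, measure_univ] at ht
  rcases lt_or_ge u 0 with h | h
  · exact ⟨0, h.le.trans (F_nonneg 0)⟩
  have := ht (Ioi_mem_nhds (show ENNReal.ofReal u < 1 by
    rw [show (1:ENNReal) = ENNReal.ofReal 1 by simp]
    exact ENNReal.ofReal_lt_ofReal_iff_of_nonneg h |>.2 hu))
  obtain ⟨n, hn⟩ := (Filter.eventually_atTop).1 this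
  refine ⟨(n:ℝ), ?_⟩
  have h2 : ENNReal.ofReal u < P {ω | Y ω ≤ (n:ℝ)} := hn n le_rfl
  have := ENNReal.toReal_mono (measure_ne_top _ _) h2.le
  simpa [F, ENNReal.toReal_ofReal h] using this

end SpectralAux

namespace SpectralAux
variable {Ω : Type*} [MeasurableSpace Ω] {P : Measure Ω} [IsProbabilityMeasure P] {Y : Ω → ℝ}
variable (hYm : Measurable Y)
include hYm

lemma Sset_nonempty {u : ℝ} (hu : u < 1) : {x : ℝ | u ≤ F P Y x}.Nonempty :=
  exists_le_F hYm hu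

lemma Sset_bddBelow {u : ℝ} (hu : 0 < u) : BddBelow {x : ℝ | u ≤ F P Y x} := by
  obtain ⟨x0, hx0⟩ := exists_F_lt hYm (P := P) hu
  refine ⟨x0, fun y hy => ?_⟩
  by_contra h
  exact absurd (le_trans hy (F_mono (le_of_not_ge h))) (not_le.2 hx0)

lemma VaR_eq_sInf : VaR P Y = fun u => sInf {x : ℝ | u ≤ (P {ω | Y ω ≤ x}).toReal} := rfl

/-- Right-continuity of the cdf gives `u ≤ F (VaR u)`. -/
lemma le_F_VaR {u : ℝ} (hu0 : 0 < u) (hu1 : u < 1) : u ≤ F P Y (VaR P Y u) := by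
  set q := VaR P Y u with hq
  have hne := Sset_nonempty hYm (P := P) hu1
  have hbd := Sset_bddBelow hYm (P := P) hu0
  -- choose xₙ ∈ S with xₙ < q + 1/(n+1)
  have hx : ∀ n : ℕ, ∃ x : ℝ, u ≤ F P Y x ∧ x < q + 1/(n+1) := by
    intro n
    have hpos : (0:ℝ) < 1/(n+1) := by positivity
    obtain ⟨x, hxS, hxlt⟩ := Real.lt_sInf_add_pos (s := {x : ℝ | u ≤ F P Y x}) hne hpos
    exact ⟨x, hxS, lt_of_lt_of_le hxlt (le_of_eq rfl)⟩
  -- F (q + 1/(n+1)) ≥ u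
  have hFn : ∀ n : ℕ, u ≤ F P Y (q + 1/(n+1)) := by
    intro n
    obtain ⟨x, hxS, hxlt⟩ := hx n
    exact le_trans hxS (F_mono hxlt.le)
  -- right continuity
  have hA : Antitone (fun n : ℕ => Y ⁻¹' Iic (q + 1/(n+1))) := by
    intro m n hmn
    apply preimage_mono
    apply Iic_subset_Iic.2
    have : (1:ℝ)/(n+1) ≤ 1/(m+1) := by
      apply one_div_le_one_div_of_le (by positivity)
      exact_mod_cast Nat.succ_le_succ hmn
    linarith
  have hI : (⋂ n : ℕ, Y ⁻¹' Iic (q + 1/(n+1))) = Y ⁻¹' Iic q := by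
    ext ω
    simp only [mem_iInter, mem_preimage, mem_Iic]
    constructor
    · intro h
      by_contra hc
      push_neg at hc
      obtain ⟨n, hn⟩ := exists_nat_one_div_lt (show (0:ℝ) < Y ω - q by linarith)
      have := h n
      linarith
    · intro h n
      have : (0:ℝ) < 1/(n+1) := by positivity
      linarith
  have ht := tendsto_measure_iInter_atTop (μ := P)
    (fun n => (hYm measurableSet_Iic).nullMeasurableSet) hA ⟨0, measure_ne_top _ _⟩
  rw [hI] at ht
  have ht' : Filter.Tendsto (fun n : ℕ => F P Y (q + 1/(n+1))) Filter.atTop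
      (nhds (F P Y q)) := by
    have := (ENNReal.tendsto_toReal (measure_ne_top P _)).comp ht
    exact this
  exact ge_of_tendsto' ht' hFn

lemma VaR_le_iff {u c : ℝ} (hu0 : 0 < u) (hu1 : u < 1) :
    VaR P Y u ≤ c ↔ u ≤ F P Y c := by
  constructor
  · intro h
    exact le_trans (le_F_VaR hYm hu0 hu1) (F_mono h)
  · intro h
    exact csInf_le (Sset_bddBelow hYm hu0) h

lemma lt_VaR_iff {u c : ℝ} (hu0 : 0 < u) (hu1 : u < 1) :
    c < VaR P Y u ↔ F P Y c < u := by
  rw [← not_le, ← not_le, not_iff_not]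
  exact VaR_le_iff hYm hu0 hu1

/-- If `q` is the unique `α`-quantile then `VaR = q`. -/
lemma VaR_eq_of_uniq {α q : ℝ} (hα0 : 0 < α) (hα1 : α < 1)
    (hq : IsQuantile P Y α q) (huq : ∀ r, IsQuantile P Y α r → r = q) :
    VaR P Y α = q := by
  have hset : {x : ℝ | α ≤ F P Y x} = Ici q := by
    ext x
    simp only [mem_setOf_eq, mem_Ici]
    constructor
    · intro hx
      by_contra h
      push_neg at h
      -- x < q, F x ≥ α; show x is a quantile, contradiction with x ≠ q
      have hlt : (P {ω | Y ω < x}).toReal ≤ α := by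
        have h1 : (P {ω | Y ω < x}).toReal ≤ (P {ω | Y ω < q}).toReal :=
          ENNReal.toReal_mono (measure_ne_top _ _)
            (measure_mono (fun ω (hw : Y ω < x) => lt_trans hw h))
        exact le_trans h1 hq.1
      have : x = q := huq x ⟨hlt, hx⟩
      exact absurd this (ne_of_lt h)
    · intro hx
      exact le_trans hq.2 (F_mono hx)
  rw [VaR, show {x : ℝ | α ≤ (P {ω | Y ω ≤ x}).toReal} = {x : ℝ | α ≤ F P Y x} from rfl, hset]
  exact csInf_Ici

lemma VaR_le_VaR {u v : ℝ} (hu : 0 < u) (hv : v < 1) (huv : u ≤ v) :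
    VaR P Y u ≤ VaR P Y v :=
  csInf_le_csInf (Sset_bddBelow hYm hu) (Sset_nonempty hYm hv)
    (fun x hx => le_trans huv hx)

omit hYm in
lemma F_measurable : Measurable (F P Y) := F_mono.measurable

lemma meas_gt_eq (x : ℝ) : P {ω | x < Y ω} = ENNReal.ofReal (1 - F P Y x) := by
  have hc : {ω | x < Y ω} = {ω | Y ω ≤ x}ᶜ := by ext ω; simp [not_le]
  rw [hc, measure_compl (show MeasurableSet {ω | Y ω ≤ x} from hYm measurableSet_Iic)
    (measure_ne_top _ _), measure_univ]
  rw [show F P Y x = (P {ω | Y ω ≤ x}).toReal from rfl,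
    ENNReal.ofReal_sub _ ENNReal.toReal_nonneg, ENNReal.ofReal_one,
    ENNReal.ofReal_toReal (measure_ne_top _ _)]

end SpectralAux

namespace SpectralAux
variable {Ω : Type*} [MeasurableSpace Ω] {P : Measure Ω} [IsProbabilityMeasure P] {Y : Ω → ℝ}
variable (hYm : Measurable Y)
include hYm

lemma lintegral_VaR_sub {α q : ℝ} (hα0 : 0 < α) (hα1 : α < 1)
    (hqF : α ≤ F P Y q) (hVaRα : VaR P Y α = q) :
    ∫⁻ u in Ioo α 1, ENNReal.ofReal (VaR P Y u - q)
      = ∫⁻ ω, ENNReal.ofReal (Y ω - q) ∂P := by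
  have hqle : ∀ u ∈ Ioo α 1, q ≤ VaR P Y u := fun u hu =>
    hVaRα ▸ VaR_le_VaR hYm hα0 hu.2 hu.1.le
  have hFm : Measurable (fun t : ℝ => F P Y (q + t)) :=
    F_measurable.comp (measurable_const.add measurable_id)
  have hSmeas : ∀ u : ℝ, MeasurableSet {t : ℝ | F P Y (q + t) < u} :=
    fun u => measurableSet_lt hFm measurable_const
  -- step 1: for u ∈ (α,1), ofReal (VaR u - q) = ∫⁻ t in Ioi 0, indicator …
  have step1 : ∀ u ∈ Ioo α 1,
      ENNReal.ofReal (VaR P Y u - q)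
        = ∫⁻ t in Ioi (0:ℝ), ({t : ℝ | F P Y (q + t) < u}.indicator 1 t) := by
    intro u hu
    have hu0 : 0 < u := lt_trans hα0 hu.1
    rw [lintegral_indicator (hSmeas u)]
    simp only [Pi.one_apply]
    rw [setLIntegral_one, Measure.restrict_apply (hSmeas u)]
    have hset : {t : ℝ | F P Y (q + t) < u} ∩ Ioi 0 = Ioo 0 (VaR P Y u - q) := by
      ext t
      simp only [mem_inter_iff, mem_setOf_eq, mem_Ioi, mem_Ioo]
      rw [← lt_VaR_iff hYm hu0 hu.2, and_comm]
      constructor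
      · rintro ⟨h1, h2⟩; exact ⟨h1, by linarith⟩
      · rintro ⟨h1, h2⟩; exact ⟨h1, by linarith⟩
    rw [hset, Real.volume_Ioo, sub_zero]
  -- rewrite the LHS using step1
  have hLHS : ∫⁻ u in Ioo α 1, ENNReal.ofReal (VaR P Y u - q)
      = ∫⁻ u in Ioo α 1, ∫⁻ t in Ioi (0:ℝ),
          ({t : ℝ | F P Y (q + t) < u}.indicator 1 t) := by
    apply setLIntegral_congr_fun measurableSet_Ioo
    exact step1
  -- step 2: Tonelli
  have hA : MeasurableSet {p : ℝ × ℝ | F P Y (q + p.2) < p.1} :=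
    measurableSet_lt (hFm.comp measurable_snd) measurable_fst
  have hswap : ∫⁻ u in Ioo α 1, ∫⁻ t in Ioi (0:ℝ),
        ({t : ℝ | F P Y (q + t) < u}.indicator 1 t)
      = ∫⁻ t in Ioi (0:ℝ), ∫⁻ u in Ioo α 1,
        ({t : ℝ | F P Y (q + t) < u}.indicator 1 t) := by
    apply lintegral_lintegral_swap
    have : (fun (p : ℝ × ℝ) => ({t : ℝ | F P Y (q + t) < p.1}.indicator 1 p.2 : ENNReal))
        = {p : ℝ × ℝ | F P Y (q + p.2) < p.1}.indicator 1 := by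
      funext p
      simp only [indicator_apply, mem_setOf_eq, Pi.one_apply]
    exact (this ▸ (measurable_one.indicator hA)).aemeasurable
  rw [hLHS, hswap]
  -- step 3: identify the inner integral with P {q + t < Y}
  have step3 : ∀ t ∈ Ioi (0:ℝ),
      (∫⁻ u in Ioo α 1, ({t : ℝ | F P Y (q + t) < u}.indicator 1 t))
        = P {ω | q + t < Y ω} := by
    intro t ht
    have h1 : (fun u : ℝ => ({t : ℝ | F P Y (q + t) < u}.indicator 1 t : ENNReal))
        = (Ioi (F P Y (q + t))).indicator 1 := by
      funext u
      simp only [indicator_apply, mem_setOf_eq, mem_Ioi, Pi.one_apply]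
    rw [h1, lintegral_indicator measurableSet_Ioi]
    simp only [Pi.one_apply]
    rw [setLIntegral_one, Measure.restrict_apply measurableSet_Ioi]
    have hge : α ≤ F P Y (q + t) :=
      le_trans hqF (F_mono (by simp only [le_add_iff_nonneg_right]; exact le_of_lt ht))
    have hset : Ioi (F P Y (q + t)) ∩ Ioo α 1 = Ioo (F P Y (q + t)) 1 := by
      ext u
      simp only [mem_inter_iff, mem_Ioi, mem_Ioo]
      constructor
      · rintro ⟨h1, _, h3⟩; exact ⟨h1, h3⟩
      · rintro ⟨h1, h2⟩; exact ⟨h1, lt_of_le_of_lt hge h1, h2⟩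
    rw [hset, Real.volume_Ioo, meas_gt_eq hYm]
  rw [setLIntegral_congr_fun measurableSet_Ioi step3]
  -- step 4: second Tonelli
  have hB : MeasurableSet {p : ℝ × Ω | q + p.1 < Y p.2} :=
    measurableSet_lt (measurable_const.add measurable_fst) (hYm.comp measurable_snd)
  have h4 : ∀ t ∈ Ioi (0:ℝ), P {ω | q + t < Y ω}
      = ∫⁻ ω, ({ω : Ω | q + t < Y ω}.indicator 1 ω) ∂P := by
    intro t _
    rw [lintegral_indicator (show MeasurableSet {ω : Ω | q + t < Y ω} from hYm measurableSet_Ioi)]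
    simp only [Pi.one_apply]
    rw [setLIntegral_one]
  rw [setLIntegral_congr_fun measurableSet_Ioi h4]
  have hswap2 : (∫⁻ t in Ioi (0:ℝ), ∫⁻ ω, ({ω : Ω | q + t < Y ω}.indicator 1 ω) ∂P)
      = ∫⁻ ω, (∫⁻ t in Ioi (0:ℝ), ({ω : Ω | q + t < Y ω}.indicator 1 ω)) ∂P := by
    apply lintegral_lintegral_swap
    have : (fun (p : ℝ × Ω) => ({ω : Ω | q + p.1 < Y ω}.indicator 1 p.2 : ENNReal))
        = {p : ℝ × Ω | q + p.1 < Y p.2}.indicator 1 := by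
      funext p
      simp only [indicator_apply, mem_setOf_eq, Pi.one_apply]
    exact (this ▸ (measurable_one.indicator hB)).aemeasurable
  rw [hswap2]
  apply lintegral_congr
  intro ω
  have h5 : (fun t : ℝ => ({ω' : Ω | q + t < Y ω'}.indicator 1 ω : ENNReal))
      = (Iio (Y ω - q)).indicator 1 := by
    funext t
    simp only [indicator_apply, mem_setOf_eq, mem_Iio, Pi.one_apply]
    congr 1
    exact propext ⟨fun h => by linarith, fun h => by linarith⟩
  rw [h5, lintegral_indicator measurableSet_Iio]
  simp only [Pi.one_apply]
  rw [setLIntegral_one, Measure.restrict_apply measurableSet_Iio]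
  have : Iio (Y ω - q) ∩ Ioi 0 = Ioo 0 (Y ω - q) := by
    ext t; simp only [mem_inter_iff, mem_Iio, mem_Ioi, mem_Ioo]; tauto
  rw [this, Real.volume_Ioo, sub_zero]

end SpectralAux

namespace SpectralAux
variable {Ω : Type*} [MeasurableSpace Ω] {P : Measure Ω} [IsProbabilityMeasure P] {Y : Ω → ℝ}
variable (hYm : Measurable Y) (hY : Integrable Y P)
include hYm hY

lemma integral_Ioo_VaR {α q : ℝ} (hα0 : 0 < α) (hα1 : α < 1)
    (hqF : α ≤ F P Y q) (hVaRα : VaR P Y α = q) :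
    ∫ u in Ioo α 1, VaR P Y u = (1 - α) * q + ∫ ω, max (Y ω - q) 0 ∂P := by
  have hmax : Integrable (fun ω => max (Y ω - q) 0) P := (hY.sub (integrable_const q)).pos_part
  have hofReal : ∀ x : ℝ, ENNReal.ofReal x = ENNReal.ofReal (max x 0) := by
    intro x
    rcases le_total x 0 with h | h
    · simp [max_eq_right h, ENNReal.ofReal_eq_zero.2 h]
    · simp [max_eq_left h]
  have hmaxnonneg : (0:Ω → ℝ) ≤ᵐ[P] fun ω => max (Y ω - q) 0 :=
    Filter.Eventually.of_forall (fun ω => le_max_right _ _)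
  have hRHSlint : ∫ ω, max (Y ω - q) 0 ∂P
      = (∫⁻ ω, ENNReal.ofReal (Y ω - q) ∂P).toReal := by
    rw [integral_eq_lintegral_of_nonneg_ae hmaxnonneg hmax.aestronglyMeasurable]
    congr 1
    exact lintegral_congr fun ω => (hofReal _).symm
  have hfin : (∫⁻ ω, ENNReal.ofReal (Y ω - q) ∂P) < ⊤ := by
    have : (∫⁻ ω, ENNReal.ofReal (Y ω - q) ∂P)
        = ∫⁻ ω, ENNReal.ofReal (max (Y ω - q) 0) ∂P := lintegral_congr fun ω => hofReal _
    rw [this]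
    exact (hasFiniteIntegral_iff_ofReal hmaxnonneg).1 hmax.hasFiniteIntegral
  -- the sub function on Ioo α 1
  have hVmono : MonotoneOn (VaR P Y) (Ioo α 1) := by
    intro u hu v hv huv
    exact VaR_le_VaR hYm (lt_trans hα0 hu.1) hv.2 huv
  have hVaem : AEMeasurable (VaR P Y) (volume.restrict (Ioo α 1)) :=
    aemeasurable_restrict_of_monotoneOn measurableSet_Ioo hVmono
  have hfaem : AEMeasurable (fun u => VaR P Y u - q) (volume.restrict (Ioo α 1)) :=
    hVaem.sub aemeasurable_const
  have hfnonneg : (0:ℝ → ℝ) ≤ᵐ[volume.restrict (Ioo α 1)] fun u => VaR P Y u - q := by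
    refine (ae_restrict_iff' measurableSet_Ioo).2 (Filter.Eventually.of_forall ?_)
    intro u hu
    have : q ≤ VaR P Y u := hVaRα ▸ VaR_le_VaR hYm hα0 hu.2 hu.1.le
    simpa using this
  have hkey := lintegral_VaR_sub hYm hα0 hα1 hqF hVaRα
  have h1 : ∫ u in Ioo α 1, (VaR P Y u - q)
      = (∫⁻ u in Ioo α 1, ENNReal.ofReal (VaR P Y u - q)).toReal := by
    exact integral_eq_lintegral_of_nonneg_ae hfnonneg hfaem.aestronglyMeasurable
  have hfint : IntegrableOn (fun u => VaR P Y u - q) (Ioo α 1) := by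
    refine ⟨hfaem.aestronglyMeasurable, ?_⟩
    rw [hasFiniteIntegral_iff_ofReal hfnonneg, hkey]
    exact hfin
  have h2 : ∫ u in Ioo α 1, (VaR P Y u - q) = ∫ ω, max (Y ω - q) 0 ∂P := by
    rw [h1, hkey, ← hRHSlint]
  have h3 : ∫ u in Ioo α 1, VaR P Y u
      = ∫ u in Ioo α 1, ((VaR P Y u - q) + q) := by norm_num
  rw [h3, integral_add hfint (integrableOn_const measure_Ioo_lt_top.ne), h2,
    integral_const]
  simp only [Measure.real, MeasurableSet.univ, Measure.restrict_apply, univ_inter, Real.volume_Ioo,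
    smul_eq_mul]
  rw [ENNReal.toReal_ofReal (by linarith)]
  ring

lemma CVaR_repr {α q : ℝ} (hα0 : 0 < α) (hα1 : α < 1)
    (hqF : α ≤ F P Y q) (hVaRα : VaR P Y α = q) :
    (1 - α) * CVaR P Y α = (1 - α) * q + ∫ ω, max (Y ω - q) 0 ∂P := by
  have h1 : ∫ u in α..1, VaR P Y u = ∫ u in Ioo α 1, VaR P Y u := by
    rw [intervalIntegral.integral_of_le hα1.le, ← integral_Ioc_eq_integral_Ioo]
  rw [CVaR, ← mul_assoc, mul_inv_cancel₀ (by linarith : (1:ℝ) - α ≠ 0), one_mul, h1]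
  exact integral_Ioo_VaR hYm hY hα0 hα1 hqF hVaRα

/-- The expected identification term at the true quantile equals `-(1-α)·CVaR`. -/
lemma Vterm_eq {α q : ℝ} (hα0 : 0 < α) (hα1 : α < 1)
    (hqF : α ≤ F P Y q) (hVaRα : VaR P Y α = q) :
    ∫ ω, (((if q < Y ω then (1:ℝ) else 0) - (1 - α)) * q
        - (if q < Y ω then (1:ℝ) else 0) * Y ω) ∂P
      = -((1 - α) * CVaR P Y α) := by
  have hmax : Integrable (fun ω => max (Y ω - q) 0) P := (hY.sub (integrable_const q)).pos_part
  have hfun : (fun ω => (((if q < Y ω then (1:ℝ) else 0) - (1 - α)) * q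
        - (if q < Y ω then (1:ℝ) else 0) * Y ω))
      = fun ω => -(max (Y ω - q) 0) - (1 - α) * q := by
    funext ω
    by_cases h : q < Y ω
    · simp only [h, if_pos, max_eq_left (by linarith : (0:ℝ) ≤ Y ω - q)]
      ring
    · push_neg at h
      simp only [if_neg (not_lt.2 h), max_eq_right (by linarith : Y ω - q ≤ (0:ℝ))]
      ring
  rw [hfun, integral_sub (hmax.neg' ) (integrable_const _), integral_neg, integral_const,
    CVaR_repr hYm hY hα0 hα1 hqF hVaRα]
  simp [measure_univ]
  ring

end SpectralAux

namespace SpectralAux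
variable {Ω : Type*} [MeasurableSpace Ω] {P : Measure Ω} [IsProbabilityMeasure P] {Y : Ω → ℝ}

lemma integral_ind_prop {c : Ω → Prop} [DecidablePred c] (hc : MeasurableSet {ω | c ω}) :
    ∫ ω, (if c ω then (1:ℝ) else 0) ∂P = (P {ω | c ω}).toReal := by
  have h : (fun ω => if c ω then (1:ℝ) else 0) = Set.indicator {ω | c ω} (fun _ => (1:ℝ)) := by
    funext ω
    by_cases h : c ω <;> simp [Set.indicator_apply, h]
  rw [h, integral_indicator_const _ hc]
  simp
  rfl

lemma integrable_ind_prop {c : Ω → Prop} [DecidablePred c] (hc : MeasurableSet {ω | c ω}) :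
    Integrable (fun ω => if c ω then (1:ℝ) else 0) P := by
  have h : (fun ω => if c ω then (1:ℝ) else 0) = Set.indicator {ω | c ω} (fun _ => (1:ℝ)) := by
    funext ω
    by_cases h : c ω <;> simp [Set.indicator_apply, h]
  rw [h]
  exact (integrable_const (1:ℝ)).indicator hc

variable (hYm : Measurable Y)
include hYm

lemma meas_ind (x : ℝ) : Measurable (fun ω => if Y ω ≤ x then (1:ℝ) else 0) :=
  Measurable.ite (hYm measurableSet_Iic) measurable_const measurable_const

lemma meas_ind' (x : ℝ) : Measurable (fun ω => if x < Y ω then (1:ℝ) else 0) :=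
  Measurable.ite (hYm measurableSet_Ioi) measurable_const measurable_const

lemma integral_ind_le (x : ℝ) :
    ∫ ω, (if Y ω ≤ x then (1:ℝ) else 0) ∂P = F P Y x :=
  integral_ind_prop (show MeasurableSet {ω | Y ω ≤ x} from hYm measurableSet_Iic)

lemma integrable_ind_mul {h : Ω → ℝ} (hh : Integrable h P) (x β : ℝ) :
    Integrable (fun ω => ((if Y ω ≤ x then (1:ℝ) else 0) - β) * h ω) P := by
  apply hh.bdd_mul (c := 1 + |β|) ((meas_ind hYm x).sub measurable_const).aestronglyMeasurable
  refine Filter.Eventually.of_forall (fun ω => ?_)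
  rw [Real.norm_eq_abs]
  show |(if Y ω ≤ x then (1:ℝ) else 0) - β| ≤ 1 + |β|
  by_cases hc : Y ω ≤ x
  · simp only [if_pos hc]
    rcases abs_cases β with ⟨h1, h2⟩ | ⟨h1, h2⟩ <;>
      rcases abs_cases ((1:ℝ) - β) with ⟨h3, h4⟩ | ⟨h3, h4⟩ <;> linarith
  · simp only [if_neg hc]
    rcases abs_cases β with ⟨h1, h2⟩ | ⟨h1, h2⟩ <;>
      rcases abs_cases ((0:ℝ) - β) with ⟨h3, h4⟩ | ⟨h3, h4⟩ <;> linarith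

end SpectralAux

namespace SpectralAux
variable {Ω : Type*} [MeasurableSpace Ω] {P : Measure Ω} [IsProbabilityMeasure P] {Y : Ω → ℝ}

lemma toReal_mono' {A B : Set Ω} (h : A ⊆ B) : (P A).toReal ≤ (P B).toReal :=
  ENNReal.toReal_mono (measure_ne_top _ _) (measure_mono h)

lemma toReal_meas_diff {A B : Set Ω} (hB : MeasurableSet B) (hBA : B ⊆ A) :
    (P (A \ B)).toReal = (P A).toReal - (P B).toReal := by
  rw [measure_diff hBA hB.nullMeasurableSet (measure_ne_top _ _),
    ENNReal.toReal_sub_of_le (measure_mono hBA) (measure_ne_top _ _)]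

variable (hYm : Measurable Y)
include hYm

lemma integrable_inddiff_mul {h : Ω → ℝ} (hh : Integrable h P) (x x' : ℝ) :
    Integrable (fun ω => ((if Y ω ≤ x then (1:ℝ) else 0)
      - (if Y ω ≤ x' then (1:ℝ) else 0)) * h ω) P := by
  apply hh.bdd_mul (c := 1) ((meas_ind hYm x).sub (meas_ind hYm x')).aestronglyMeasurable
  refine Filter.Eventually.of_forall (fun ω => ?_)
  rw [Real.norm_eq_abs]
  by_cases h1 : Y ω ≤ x <;> by_cases h2 : Y ω ≤ x' <;> simp [h1, h2]

lemma core_lt {α q a : ℝ} (hα0 : 0 < α) (hα1 : α < 1)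
    (hq : IsQuantile P Y α q) (huq : ∀ r, IsQuantile P Y α r → r = q)
    {g : ℝ → ℝ} (hg : StrictMono g) (hgY : Integrable (fun ω => g (Y ω)) P)
    (hne : a ≠ q) :
    ∫ ω, ((if Y ω ≤ q then (1:ℝ) else 0) - α) * (g q - g (Y ω)) ∂P
      < ∫ ω, ((if Y ω ≤ a then (1:ℝ) else 0) - α) * (g a - g (Y ω)) ∂P := by
  have hsubint : ∀ x : ℝ, Integrable (fun ω => g x - g (Y ω)) P :=
    fun x => (integrable_const (g x)).sub hgY
  have hfa : Integrable (fun ω => ((if Y ω ≤ a then (1:ℝ) else 0) - α) * (g a - g (Y ω))) P :=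
    integrable_ind_mul hYm (hsubint a) a α
  have hfq : Integrable (fun ω => ((if Y ω ≤ q then (1:ℝ) else 0) - α) * (g q - g (Y ω))) P :=
    integrable_ind_mul hYm (hsubint q) q α
  rw [← sub_pos, ← integral_sub hfa hfq]
  -- pointwise decomposition
  set t1 : Ω → ℝ := fun ω => ((if Y ω ≤ a then (1:ℝ) else 0)
    - (if Y ω ≤ q then (1:ℝ) else 0)) * (g a - g (Y ω)) with ht1def
  have ht1int : Integrable t1 P := integrable_inddiff_mul hYm (hsubint a) a q
  have ht2int : Integrable (fun ω => ((if Y ω ≤ q then (1:ℝ) else 0) - α) * (g a - g q)) P :=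
    integrable_ind_mul hYm (integrable_const _) q α
  have hpt : ∀ ω, ((if Y ω ≤ a then (1:ℝ) else 0) - α) * (g a - g (Y ω))
      - ((if Y ω ≤ q then (1:ℝ) else 0) - α) * (g q - g (Y ω))
      = t1 ω + ((if Y ω ≤ q then (1:ℝ) else 0) - α) * (g a - g q) := by
    intro ω
    simp only [ht1def]
    by_cases h1 : Y ω ≤ a <;> by_cases h2 : Y ω ≤ q <;> simp [h1, h2] <;> ring
  have hsplit : ∫ ω, (((if Y ω ≤ a then (1:ℝ) else 0) - α) * (g a - g (Y ω))
      - ((if Y ω ≤ q then (1:ℝ) else 0) - α) * (g q - g (Y ω))) ∂P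
      = ∫ ω, t1 ω ∂P + (F P Y q - α) * (g a - g q) := by
    rw [integral_congr_ae (Filter.Eventually.of_forall hpt), integral_add ht1int ht2int]
    congr 1
    rw [integral_mul_const, integral_sub (integrable_ind_prop
      (show MeasurableSet {ω | Y ω ≤ q} from hYm measurableSet_Iic)) (integrable_const α)]
    rw [integral_const]
    simp only [Measure.real, measure_univ, ENNReal.toReal_one, smul_eq_mul, one_mul]
    rw [integral_ind_le hYm]
  rw [hsplit]
  have hFqα : α ≤ F P Y q := hq.2
  rcases lt_or_gt_of_ne hne with hlt | hgt
  · -- a < q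
    set x := (a + q) / 2 with hxdef
    have hax : a < x := by rw [hxdef]; linarith
    have hxq : x < q := by rw [hxdef]; linarith
    set low : Ω → ℝ := fun ω => (g q - g a) * (if Y ω = q then (1:ℝ) else 0)
      + (g x - g a) * (if (x < Y ω ∧ Y ω < q) then (1:ℝ) else 0) with hlowdef
    have hlowint : Integrable low P := by
      apply Integrable.add
      · exact (integrable_ind_prop (show MeasurableSet {ω | Y ω = q} from
          hYm (measurableSet_singleton q))).const_mul _
      · exact (integrable_ind_prop (show MeasurableSet {ω | x < Y ω ∧ Y ω < q} from
          (hYm measurableSet_Ioi).inter (hYm measurableSet_Iio))).const_mul _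
    have hbound : ∀ ω, low ω ≤ t1 ω := by
      intro ω
      simp only [hlowdef, ht1def]
      by_cases hyq : Y ω = q
      · have h1 : ¬ (Y ω ≤ a) := by rw [hyq]; linarith
        have h2 : Y ω ≤ q := le_of_eq hyq
        have h3 : ¬ (x < Y ω ∧ Y ω < q) := by rw [hyq]; intro h; exact absurd h.2 (lt_irrefl q)
        rw [if_pos hyq, if_neg h3, if_neg h1, if_pos h2, hyq]
        exact le_of_eq (by ring)
      · by_cases hmem : x < Y ω ∧ Y ω < q
        · have h1 : ¬ (Y ω ≤ a) := by push_neg; linarith [hmem.1]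
          have h2 : Y ω ≤ q := hmem.2.le
          have h4 : g x ≤ g (Y ω) := (hg hmem.1).le
          rw [if_neg hyq, if_pos hmem, if_neg h1, if_pos h2]
          nlinarith [hg hmem.1]
        · simp only [if_neg hyq, if_neg hmem]
          by_cases h1 : Y ω ≤ a
          · have h2 : Y ω ≤ q := le_trans h1 hlt.le
            simp [h1, h2]
          · by_cases h2 : Y ω ≤ q
            · have : a < Y ω := not_le.1 h1
              have := hg this
              simp only [if_neg h1, if_pos h2]
              nlinarith
            · simp [h1, h2]
    have hlowint_eq : ∫ ω, low ω ∂P = (g q - g a) * (P {ω | Y ω = q}).toReal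
        + (g x - g a) * (P {ω | x < Y ω ∧ Y ω < q}).toReal := by
      simp only [hlowdef]
      rw [integral_add ((integrable_ind_prop (show MeasurableSet {ω | Y ω = q} from
          hYm (measurableSet_singleton q))).const_mul _)
        ((integrable_ind_prop (show MeasurableSet {ω | x < Y ω ∧ Y ω < q} from
          (hYm measurableSet_Ioi).inter (hYm measurableSet_Iio))).const_mul _)]
      rw [integral_const_mul, integral_const_mul,
        integral_ind_prop (show MeasurableSet {ω | Y ω = q} from hYm (measurableSet_singleton q)),
        integral_ind_prop (show MeasurableSet {ω | x < Y ω ∧ Y ω < q} from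
          (hYm measurableSet_Ioi).inter (hYm measurableSet_Iio))]
    have hPq : (P {ω | Y ω = q}).toReal = F P Y q - (P {ω | Y ω < q}).toReal := by
      have hset : {ω | Y ω = q} = {ω | Y ω ≤ q} \ {ω | Y ω < q} := by
        ext ω
        simp only [mem_setOf_eq, mem_diff, not_lt]
        constructor
        · intro h; exact ⟨h.le, h.ge⟩
        · intro h; exact le_antisymm h.1 h.2
      have hd := toReal_meas_diff (P := P) (A := {ω | Y ω ≤ q}) (B := {ω | Y ω < q})
        (hYm measurableSet_Iio) (fun ω (h : Y ω < q) => le_of_lt h)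
      rw [hset, hd]
      rfl
    have ht1low : ∫ ω, low ω ∂P ≤ ∫ ω, t1 ω ∂P := integral_mono hlowint ht1int hbound
    have hgqa : 0 < g q - g a := by have := hg hlt; linarith
    have hgxa : 0 < g x - g a := by have := hg hax; linarith
    rcases lt_or_ge (P {ω | Y ω < q}).toReal α with hPlt | hPge
    · have h1 : 0 ≤ (P {ω | x < Y ω ∧ Y ω < q}).toReal := ENNReal.toReal_nonneg
      nlinarith [ht1low, hlowint_eq, hPq]
    · -- P(Y<q) = α; get positive mass in (x,q)
      have hPeq : (P {ω | Y ω < q}).toReal = α := le_antisymm hq.1 hPge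
      have hxnq : ¬ IsQuantile P Y α x := fun hc => absurd (huq x hc) (ne_of_lt hxq)
      have hx1 : (P {ω | Y ω < x}).toReal ≤ α := by
        rw [← hPeq]
        exact toReal_mono' (fun ω (h : Y ω < x) => lt_trans h hxq)
      have hx2 : F P Y x < α := by
        by_contra hcon
        push_neg at hcon
        exact hxnq ⟨hx1, hcon⟩
      have hPxq : (P {ω | x < Y ω ∧ Y ω < q}).toReal
          = (P {ω | Y ω < q}).toReal - F P Y x := by
        have hset : {ω | x < Y ω ∧ Y ω < q} = {ω | Y ω < q} \ {ω | Y ω ≤ x} := by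
          ext ω
          simp only [mem_setOf_eq, mem_diff, not_le]
          tauto
        have hd := toReal_meas_diff (P := P) (A := {ω | Y ω < q}) (B := {ω | Y ω ≤ x})
          (hYm measurableSet_Iic) (fun ω (h : Y ω ≤ x) => lt_of_le_of_lt h hxq)
        rw [hset, hd]
        rfl
      have hpos : 0 < (P {ω | x < Y ω ∧ Y ω < q}).toReal := by
        rw [hPxq, hPeq]; linarith
      nlinarith [ht1low, hlowint_eq, hPq]
  · -- q < a
    set x := (q + a) / 2 with hxdef
    have hqx : q < x := by rw [hxdef]; linarith
    have hxa : x < a := by rw [hxdef]; linarith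
    have hgaq : 0 < g a - g q := by have := hg hgt; linarith
    have ht1nonneg : ∀ ω, 0 ≤ t1 ω := by
      intro ω
      simp only [ht1def]
      by_cases h2 : Y ω ≤ q
      · have h1 : Y ω ≤ a := le_trans h2 hgt.le
        simp [h1, h2]
      · by_cases h1 : Y ω ≤ a
        · have := hg.monotone h1
          simp only [if_pos h1, if_neg h2]
          nlinarith
        · simp [h1, h2]
    rcases lt_or_ge α (F P Y q) with hFgt | hFle
    · have h1 : 0 ≤ ∫ ω, t1 ω ∂P := integral_nonneg ht1nonneg
      nlinarith
    · -- F q = α; positive mass in (q,x)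
      have hFeq : F P Y q = α := le_antisymm hFle hq.2
      have hxnq : ¬ IsQuantile P Y α x := fun hc => absurd (huq x hc) (ne_of_gt hqx)
      have hx2 : α ≤ F P Y x := hFeq ▸ F_mono hqx.le
      have hx1 : α < (P {ω | Y ω < x}).toReal := by
        by_contra hcon
        push_neg at hcon
        exact hxnq ⟨hcon, hx2⟩
      have hPqx : (P {ω | q < Y ω ∧ Y ω < x}).toReal
          = (P {ω | Y ω < x}).toReal - F P Y q := by
        have hset : {ω | q < Y ω ∧ Y ω < x} = {ω | Y ω < x} \ {ω | Y ω ≤ q} := by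
          ext ω
          simp only [mem_setOf_eq, mem_diff, not_le]
          tauto
        have hd := toReal_meas_diff (P := P) (A := {ω | Y ω < x}) (B := {ω | Y ω ≤ q})
          (hYm measurableSet_Iic) (fun ω (h : Y ω ≤ q) => lt_of_le_of_lt h hqx)
        rw [hset, hd]
        rfl
      have hpos : 0 < (P {ω | q < Y ω ∧ Y ω < x}).toReal := by
        rw [hPqx, hFeq]; linarith
      set low : Ω → ℝ := fun ω =>
        (g a - g x) * (if (q < Y ω ∧ Y ω < x) then (1:ℝ) else 0) with hlowdef
      have hmemmeas : MeasurableSet {ω | q < Y ω ∧ Y ω < x} :=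
        (hYm measurableSet_Ioi).inter (hYm measurableSet_Iio)
      have hlowint : Integrable low P := (integrable_ind_prop hmemmeas).const_mul _
      have hbound : ∀ ω, low ω ≤ t1 ω := by
        intro ω
        simp only [hlowdef, ht1def]
        by_cases hmem : q < Y ω ∧ Y ω < x
        · have h1 : Y ω ≤ a := by linarith [hmem.2]
          have h2 : ¬ (Y ω ≤ q) := by push_neg; exact hmem.1
          have h4 := hg hmem.2
          simp only [if_pos hmem, if_pos h1, if_neg h2]
          nlinarith
        · rw [if_neg hmem]
          simpa using ht1nonneg ω
      have ht1low : ∫ ω, low ω ∂P ≤ ∫ ω, t1 ω ∂P := integral_mono hlowint ht1int hbound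
      have hloweq : ∫ ω, low ω ∂P
          = (g a - g x) * (P {ω | q < Y ω ∧ Y ω < x}).toReal := by
        simp only [hlowdef]
        rw [integral_const_mul, integral_ind_prop hmemmeas]
      have hgax : 0 < g a - g x := by have := hg hxa; linarith
      nlinarith

end SpectralAux

namespace SpectralAux
variable {Ω : Type*} [MeasurableSpace Ω] {P : Measure Ω} [IsProbabilityMeasure P] {Y : Ω → ℝ}
variable (hYm : Measurable Y) (hY : Integrable Y P)
include hYm hY

lemma integrable_identif (x β : ℝ) :
    Integrable (fun ω => ((if x < Y ω then (1:ℝ) else 0) - β) * x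
      - (if x < Y ω then (1:ℝ) else 0) * Y ω) P := by
  have hs : MeasurableSet {ω | x < Y ω} := hYm measurableSet_Ioi
  apply Integrable.sub
  · exact ((integrable_ind_prop hs).sub (integrable_const β)).mul_const x
  · exact hY.bdd_mul (c := 1) (meas_ind' hYm x).aestronglyMeasurable
      (Filter.Eventually.of_forall fun ω => by by_cases h : x < Y ω <;> simp [h])

lemma dagger {Gm : ℝ → ℝ} (hGmY : Integrable (fun ω => Gm (Y ω)) P) (α' κ x : ℝ) :
    (∫ ω, ((if Y ω ≤ x then (1:ℝ) else 0) - α') * (Gm x - Gm (Y ω)) ∂P)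
      + κ * ∫ ω, (((if x < Y ω then (1:ℝ) else 0) - (1 - α')) * x
          - (if x < Y ω then (1:ℝ) else 0) * Y ω) ∂P
    = (∫ ω, ((if Y ω ≤ x then (1:ℝ) else 0) - α')
          * ((Gm x - κ * x) - (Gm (Y ω) - κ * Y ω)) ∂P)
      - κ * (1 - α') * ∫ ω, Y ω ∂P := by
  have h1 : Integrable (fun ω => ((if Y ω ≤ x then (1:ℝ) else 0) - α') * (Gm x - Gm (Y ω))) P :=
    integrable_ind_mul hYm ((integrable_const (Gm x)).sub hGmY) x α'
  have h2 := integrable_identif hYm hY x (1 - α')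
  have h3 : Integrable (fun ω => ((if Y ω ≤ x then (1:ℝ) else 0) - α')
      * ((Gm x - κ * x) - (Gm (Y ω) - κ * Y ω))) P :=
    integrable_ind_mul hYm ((integrable_const (Gm x - κ * x)).sub
      (hGmY.sub (hY.const_mul κ))) x α'
  rw [← integral_const_mul κ _, ← integral_add h1 (h2.const_mul κ),
    ← integral_const_mul (κ * (1 - α')), ← integral_sub h3 ((hY.const_mul (κ * (1 - α'))))]
  apply integral_congr_ae
  apply Filter.Eventually.of_forall
  intro ω
  by_cases h : Y ω ≤ x
  · simp only [if_pos h, if_neg (not_lt.2 h)]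
    ring
  · simp only [if_neg h, if_pos (not_le.1 h)]
    ring

end SpectralAux

namespace SpectralAux
variable {Ω : Type*} [MeasurableSpace Ω] {P : Measure Ω} [IsProbabilityMeasure P] {Y : Ω → ℝ}
variable (hYm : Measurable Y) (hY : Integrable Y P)
include hYm hY

lemma expected_score_eq (K : Finset ℕ) (k : ℕ) (α p : ℕ → ℝ) (G : ℕ → ℝ → ℝ) (Gk' : ℝ → ℝ)
    (b : ℕ → ℝ) (hGint : ∀ m ∈ K, Integrable (fun ω => G m (Y ω)) P)
    (hGkY : Integrable (fun ω => G k (Y ω)) P) :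
    ∫ ω, ((∑ m ∈ K, ((if Y ω ≤ b m then (1:ℝ) else 0) - α m) * (G m (b m) - G m (Y ω)))
        - G k (b k) + G k (Y ω)
        + Gk' (b k) * (b k + ∑ m ∈ K, p m / (1 - α m)
            * (((if b m < Y ω then (1:ℝ) else 0) - (1 - α m)) * b m
              - (if b m < Y ω then (1:ℝ) else 0) * Y ω))) ∂P
    = (∑ m ∈ K, ∫ ω, ((if Y ω ≤ b m then (1:ℝ) else 0) - α m) * (G m (b m) - G m (Y ω)) ∂P)
        - G k (b k) + (∫ ω, G k (Y ω) ∂P)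
        + Gk' (b k) * (b k + ∑ m ∈ K, p m / (1 - α m)
            * ∫ ω, (((if b m < Y ω then (1:ℝ) else 0) - (1 - α m)) * b m
              - (if b m < Y ω then (1:ℝ) else 0) * Y ω) ∂P) := by
  have hint1 : ∀ m ∈ K, Integrable
      (fun ω => ((if Y ω ≤ b m then (1:ℝ) else 0) - α m) * (G m (b m) - G m (Y ω))) P :=
    fun m hm => integrable_ind_mul hYm ((integrable_const _).sub (hGint m hm)) (b m) (α m)
  have hsum1 : Integrable (fun ω => ∑ m ∈ K,
      ((if Y ω ≤ b m then (1:ℝ) else 0) - α m) * (G m (b m) - G m (Y ω))) P :=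
    integrable_finset_sum K hint1
  have hint2 : ∀ m ∈ K, Integrable (fun ω => p m / (1 - α m)
      * (((if b m < Y ω then (1:ℝ) else 0) - (1 - α m)) * b m
        - (if b m < Y ω then (1:ℝ) else 0) * Y ω)) P :=
    fun m _ => (integrable_identif hYm hY (b m) (1 - α m)).const_mul _
  have hsum2 : Integrable (fun ω => ∑ m ∈ K, p m / (1 - α m)
      * (((if b m < Y ω then (1:ℝ) else 0) - (1 - α m)) * b m
        - (if b m < Y ω then (1:ℝ) else 0) * Y ω)) P := integrable_finset_sum K hint2
  have hfull2 : Integrable (fun ω => Gk' (b k) * (b k + ∑ m ∈ K, p m / (1 - α m)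
      * (((if b m < Y ω then (1:ℝ) else 0) - (1 - α m)) * b m
        - (if b m < Y ω then (1:ℝ) else 0) * Y ω))) P :=
    ((integrable_const (b k)).add hsum2).const_mul _
  have hB : Integrable (fun ω => (∑ m ∈ K,
      ((if Y ω ≤ b m then (1:ℝ) else 0) - α m) * (G m (b m) - G m (Y ω))) - G k (b k)) P :=
    hsum1.sub (integrable_const _)
  have hA : Integrable (fun ω => (∑ m ∈ K,
      ((if Y ω ≤ b m then (1:ℝ) else 0) - α m) * (G m (b m) - G m (Y ω)))
      - G k (b k) + G k (Y ω)) P := hB.add hGkY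
  rw [integral_add hA hfull2,
    integral_add hB hGkY,
    integral_sub hsum1 (integrable_const _),
    integral_finset_sum K hint1, integral_const]
  simp only [Measure.real, measure_univ, ENNReal.toReal_one, one_smul]
  congr 1
  have hC : Integrable (fun ω => b k + ∑ m ∈ K, p m / (1 - α m)
      * (((if b m < Y ω then (1:ℝ) else 0) - (1 - α m)) * b m
        - (if b m < Y ω then (1:ℝ) else 0) * Y ω)) P := (integrable_const _).add hsum2
  rw [integral_const_mul, integral_add (integrable_const _) hsum2, integral_const,
    integral_finset_sum K hint2]
  simp only [Measure.real, measure_univ, ENNReal.toReal_one, one_smul]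
  congr 2
  apply Finset.sum_congr rfl
  intro m _
  rw [integral_const_mul]

end SpectralAux

/-- Fissler–Ziegel scoring functions for spectral risk measures with finitely supported
spectrum: strict consistency for `(VaR_{α₁}, …, VaR_{α_{k−1}}, ρ^φ)`. -/
theorem spectral_score_strictly_consistent {Ω : Type*} [MeasurableSpace Ω] (P : Measure Ω)
    [IsProbabilityMeasure P] (k : ℕ) (hk : 2 ≤ k)
    (α p : ℕ → ℝ)
    (hα0 : 0 < α 1) (hα1 : α (k - 1) < 1)
    (hαmono : ∀ m : ℕ, 1 ≤ m → m + 1 ≤ k - 1 → α m < α (m + 1))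
    (hp : ∀ m ∈ Finset.Icc 1 (k - 1), p m ∈ Set.Ioc (0:ℝ) 1)
    (hpsum : ∑ m ∈ Finset.Icc 1 (k - 1), p m = 1)
    (Y : Ω → ℝ) (hYm : Measurable Y) (hY : Integrable Y P)
    (huniq : ∀ m ∈ Finset.Icc 1 (k - 1), ∃! q : ℝ, IsQuantile P Y (α m) q)
    (G : ℕ → ℝ → ℝ) (Gk' : ℝ → ℝ)
    -- G k is strictly convex with subgradient Gk'
    (hGk : ∀ x y : ℝ, G k x + Gk' x * (y - x) ≤ G k y)
    (hGkstrict : ∀ x y : ℝ, y ≠ x → G k x + Gk' x * (y - x) < G k y)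
    -- for every 𝔞_k and each m, the map x ↦ G_m(x) − (x p_m/(1−α_m)) G_k'(𝔞_k)
    -- is strictly increasing
    (hGm : ∀ ak : ℝ, ∀ m ∈ Finset.Icc 1 (k - 1),
      StrictMono (fun x => G m x - x * p m / (1 - α m) * Gk' ak))
    (hGint : ∀ m ∈ Finset.Icc 1 k, Integrable (fun ω => G m (Y ω)) P)
    (S : (ℕ → ℝ) → ℝ → ℝ)
    (hS : ∀ (a : ℕ → ℝ) (y : ℝ), S a y =
      (∑ m ∈ Finset.Icc 1 (k - 1),
        ((if y ≤ a m then (1:ℝ) else 0) - α m) * (G m (a m) - G m y))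
      - G k (a k) + G k y
      + Gk' (a k) * (a k + ∑ m ∈ Finset.Icc 1 (k - 1),
          p m / (1 - α m) * (((if a m < y then (1:ℝ) else 0) - (1 - α m)) * a m
            - (if a m < y then (1:ℝ) else 0) * y)))
    (M : ℕ → ℝ)
    (hMvar : ∀ m ∈ Finset.Icc 1 (k - 1), M m = VaR P Y (α m))
    (hMspec : M k = ∑ m ∈ Finset.Icc 1 (k - 1), p m * CVaR P Y (α m)) :
    ∀ a : ℕ → ℝ, (∀ m : ℕ, 1 ≤ m → m + 1 ≤ k - 1 → a m ≤ a (m + 1)) →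
      (∃ m ∈ Finset.Icc 1 k, a m ≠ M m) →
      ∫ ω, S M (Y ω) ∂P < ∫ ω, S a (Y ω) ∂P := by
  intro a _hamono hex
  classical
  -- range of the α's
  have hstep : ∀ j : ℕ, j ≤ k - 1 → ∀ i : ℕ, 1 ≤ i → i ≤ j → α i ≤ α j := by
    intro j
    induction j with
    | zero => intro _ i h1 hij; exact absurd hij (by omega)
    | succ n ih =>
      intro hjk i h1 hij
      by_cases hin : i ≤ n
      · have h1n : 1 ≤ n := le_trans h1 hin
        exact le_trans (ih (by omega) i h1 hin) (le_of_lt (hαmono n h1n hjk))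
      · have hieq : i = n + 1 := by omega
        rw [hieq]
  have hαrange : ∀ m ∈ Finset.Icc 1 (k - 1), 0 < α m ∧ α m < 1 := by
    intro m hm
    rw [Finset.mem_Icc] at hm
    exact ⟨lt_of_lt_of_le hα0 (hstep m hm.2 1 le_rfl hm.1),
      lt_of_le_of_lt (hstep (k - 1) le_rfl m hm.1 hm.2) hα1⟩
  -- quantile facts at M m
  have hqM : ∀ m ∈ Finset.Icc 1 (k - 1), IsQuantile P Y (α m) (M m)
      ∧ (∀ r, IsQuantile P Y (α m) r → r = M m) := by
    intro m hm
    obtain ⟨hm0, hm1⟩ := hαrange m hm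
    obtain ⟨q, hq, hu⟩ := huniq m hm
    have huq : ∀ r, IsQuantile P Y (α m) r → r = q := fun r hr => hu r hr
    have hVq : VaR P Y (α m) = q := SpectralAux.VaR_eq_of_uniq hYm hm0 hm1 hq huq
    have hMm : M m = q := by rw [hMvar m hm, hVq]
    rw [hMm]
    exact ⟨hq, huq⟩
  -- identification term at the true quantile
  have hBM : ∀ m ∈ Finset.Icc 1 (k - 1),
      ∫ ω, (((if M m < Y ω then (1:ℝ) else 0) - (1 - α m)) * M m
        - (if M m < Y ω then (1:ℝ) else 0) * Y ω) ∂P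
      = -((1 - α m) * CVaR P Y (α m)) := by
    intro m hm
    obtain ⟨hm0, hm1⟩ := hαrange m hm
    obtain ⟨hq, huq⟩ := hqM m hm
    have hVq : VaR P Y (α m) = M m := SpectralAux.VaR_eq_of_uniq hYm hm0 hm1 hq huq
    exact SpectralAux.Vterm_eq hYm hY hm0 hm1 hq.2 hVq
  have hsumBM : ∑ m ∈ Finset.Icc 1 (k - 1), p m / (1 - α m)
      * ∫ ω, (((if M m < Y ω then (1:ℝ) else 0) - (1 - α m)) * M m
        - (if M m < Y ω then (1:ℝ) else 0) * Y ω) ∂P = -(M k) := by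
    rw [hMspec, ← Finset.sum_neg_distrib]
    apply Finset.sum_congr rfl
    intro m hm
    rw [hBM m hm]
    have hne : (1:ℝ) - α m ≠ 0 := by linarith [(hαrange m hm).2]
    field_simp
  -- expansions of both expected scores
  have hKsub : ∀ m ∈ Finset.Icc 1 (k - 1), Integrable (fun ω => G m (Y ω)) P := by
    intro m hm
    rw [Finset.mem_Icc] at hm
    exact hGint m (Finset.mem_Icc.2 ⟨hm.1, by omega⟩)
  have hGkY : Integrable (fun ω => G k (Y ω)) P :=
    hGint k (Finset.mem_Icc.2 ⟨by omega, le_rfl⟩)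
  have hIa : ∫ ω, S a (Y ω) ∂P
      = (∑ m ∈ Finset.Icc 1 (k - 1), ∫ ω, ((if Y ω ≤ a m then (1:ℝ) else 0) - α m)
          * (G m (a m) - G m (Y ω)) ∂P)
        - G k (a k) + (∫ ω, G k (Y ω) ∂P)
        + Gk' (a k) * (a k + ∑ m ∈ Finset.Icc 1 (k - 1), p m / (1 - α m)
            * ∫ ω, (((if a m < Y ω then (1:ℝ) else 0) - (1 - α m)) * a m
              - (if a m < Y ω then (1:ℝ) else 0) * Y ω) ∂P) := by
    simp only [hS]
    exact SpectralAux.expected_score_eq hYm hY (Finset.Icc 1 (k - 1)) k α p G Gk' a hKsub hGkY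
  have hIM : ∫ ω, S M (Y ω) ∂P
      = (∑ m ∈ Finset.Icc 1 (k - 1), ∫ ω, ((if Y ω ≤ M m then (1:ℝ) else 0) - α m)
          * (G m (M m) - G m (Y ω)) ∂P)
        - G k (M k) + (∫ ω, G k (Y ω) ∂P)
        + Gk' (M k) * (M k + ∑ m ∈ Finset.Icc 1 (k - 1), p m / (1 - α m)
            * ∫ ω, (((if M m < Y ω then (1:ℝ) else 0) - (1 - α m)) * M m
              - (if M m < Y ω then (1:ℝ) else 0) * Y ω) ∂P) := by
    simp only [hS]
    exact SpectralAux.expected_score_eq hYm hY (Finset.Icc 1 (k - 1)) k α p G Gk' M hKsub hGkY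
  rw [hIa, hIM]
  -- the M-side linear term vanishes
  have hzero : Gk' (M k) * (M k + ∑ m ∈ Finset.Icc 1 (k - 1), p m / (1 - α m)
      * ∫ ω, (((if M m < Y ω then (1:ℝ) else 0) - (1 - α m)) * M m
        - (if M m < Y ω then (1:ℝ) else 0) * Y ω) ∂P) = 0 := by
    rw [hsumBM]
    ring
  rw [hzero]
  set c := Gk' (a k) with hcdef
  -- per-m comparison
  have hperm : ∀ m ∈ Finset.Icc 1 (k - 1),
      (∫ ω, ((if Y ω ≤ M m then (1:ℝ) else 0) - α m) * (G m (M m) - G m (Y ω)) ∂P)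
        + c * (p m / (1 - α m)
          * ∫ ω, (((if M m < Y ω then (1:ℝ) else 0) - (1 - α m)) * M m
            - (if M m < Y ω then (1:ℝ) else 0) * Y ω) ∂P)
      ≤ (∫ ω, ((if Y ω ≤ a m then (1:ℝ) else 0) - α m) * (G m (a m) - G m (Y ω)) ∂P)
        + c * (p m / (1 - α m)
          * ∫ ω, (((if a m < Y ω then (1:ℝ) else 0) - (1 - α m)) * a m
            - (if a m < Y ω then (1:ℝ) else 0) * Y ω) ∂P) := by
    intro m hm
    by_cases hne : a m = M m
    · rw [hne]
    · obtain ⟨hm0, hm1⟩ := hαrange m hm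
      obtain ⟨hq, huq⟩ := hqM m hm
      set κ := Gk' (a k) * (p m / (1 - α m)) with hκdef
      have hGmY := hKsub m hm
      have hd1 := SpectralAux.dagger hYm hY hGmY (α m) κ (a m)
      have hd2 := SpectralAux.dagger hYm hY hGmY (α m) κ (M m)
      have hgsm : StrictMono (fun t => G m t - κ * t) := by
        have hfeq : (fun x => G m x - x * p m / (1 - α m) * Gk' (a k))
            = (fun t => G m t - κ * t) := by
          funext t
          rw [hκdef]
          ring
        rw [← hfeq]
        exact hGm (a k) m hm
      have hgY : Integrable (fun ω => G m (Y ω) - κ * Y ω) P := hGmY.sub (hY.const_mul κ)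
      have hcore := SpectralAux.core_lt hYm hm0 hm1 hq huq hgsm hgY hne
      have e1 : c * (p m / (1 - α m)
          * ∫ ω, (((if M m < Y ω then (1:ℝ) else 0) - (1 - α m)) * M m
            - (if M m < Y ω then (1:ℝ) else 0) * Y ω) ∂P)
        = κ * ∫ ω, (((if M m < Y ω then (1:ℝ) else 0) - (1 - α m)) * M m
            - (if M m < Y ω then (1:ℝ) else 0) * Y ω) ∂P := by
        rw [hκdef, hcdef]; ring
      have e2 : c * (p m / (1 - α m)
          * ∫ ω, (((if a m < Y ω then (1:ℝ) else 0) - (1 - α m)) * a m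
            - (if a m < Y ω then (1:ℝ) else 0) * Y ω) ∂P)
        = κ * ∫ ω, (((if a m < Y ω then (1:ℝ) else 0) - (1 - α m)) * a m
            - (if a m < Y ω then (1:ℝ) else 0) * Y ω) ∂P := by
        rw [hκdef, hcdef]; ring
      rw [e1, e2]
      linarith [hd1, hd2, hcore]
  have hpermlt : ∀ m ∈ Finset.Icc 1 (k - 1), a m ≠ M m →
      (∫ ω, ((if Y ω ≤ M m then (1:ℝ) else 0) - α m) * (G m (M m) - G m (Y ω)) ∂P)
        + c * (p m / (1 - α m)
          * ∫ ω, (((if M m < Y ω then (1:ℝ) else 0) - (1 - α m)) * M m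
            - (if M m < Y ω then (1:ℝ) else 0) * Y ω) ∂P)
      < (∫ ω, ((if Y ω ≤ a m then (1:ℝ) else 0) - α m) * (G m (a m) - G m (Y ω)) ∂P)
        + c * (p m / (1 - α m)
          * ∫ ω, (((if a m < Y ω then (1:ℝ) else 0) - (1 - α m)) * a m
            - (if a m < Y ω then (1:ℝ) else 0) * Y ω) ∂P) := by
    intro m hm hne
    obtain ⟨hm0, hm1⟩ := hαrange m hm
    obtain ⟨hq, huq⟩ := hqM m hm
    set κ := Gk' (a k) * (p m / (1 - α m)) with hκdef
    have hGmY := hKsub m hm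
    have hd1 := SpectralAux.dagger hYm hY hGmY (α m) κ (a m)
    have hd2 := SpectralAux.dagger hYm hY hGmY (α m) κ (M m)
    have hgsm : StrictMono (fun t => G m t - κ * t) := by
      have hfeq : (fun x => G m x - x * p m / (1 - α m) * Gk' (a k))
          = (fun t => G m t - κ * t) := by
        funext t
        rw [hκdef]
        ring
      rw [← hfeq]
      exact hGm (a k) m hm
    have hgY : Integrable (fun ω => G m (Y ω) - κ * Y ω) P := hGmY.sub (hY.const_mul κ)
    have hcore := SpectralAux.core_lt hYm hm0 hm1 hq huq hgsm hgY hne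
    have e1 : c * (p m / (1 - α m)
        * ∫ ω, (((if M m < Y ω then (1:ℝ) else 0) - (1 - α m)) * M m
          - (if M m < Y ω then (1:ℝ) else 0) * Y ω) ∂P)
      = κ * ∫ ω, (((if M m < Y ω then (1:ℝ) else 0) - (1 - α m)) * M m
          - (if M m < Y ω then (1:ℝ) else 0) * Y ω) ∂P := by
      rw [hκdef, hcdef]; ring
    have e2 : c * (p m / (1 - α m)
        * ∫ ω, (((if a m < Y ω then (1:ℝ) else 0) - (1 - α m)) * a m
          - (if a m < Y ω then (1:ℝ) else 0) * Y ω) ∂P)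
      = κ * ∫ ω, (((if a m < Y ω then (1:ℝ) else 0) - (1 - α m)) * a m
          - (if a m < Y ω then (1:ℝ) else 0) * Y ω) ∂P := by
      rw [hκdef, hcdef]; ring
    rw [e1, e2]
    linarith [hd1, hd2, hcore]
  -- sum-level comparison
  have hsum_le : (∑ m ∈ Finset.Icc 1 (k - 1),
        ∫ ω, ((if Y ω ≤ M m then (1:ℝ) else 0) - α m) * (G m (M m) - G m (Y ω)) ∂P)
      + c * (∑ m ∈ Finset.Icc 1 (k - 1), p m / (1 - α m)
          * ∫ ω, (((if M m < Y ω then (1:ℝ) else 0) - (1 - α m)) * M m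
            - (if M m < Y ω then (1:ℝ) else 0) * Y ω) ∂P)
      ≤ (∑ m ∈ Finset.Icc 1 (k - 1),
        ∫ ω, ((if Y ω ≤ a m then (1:ℝ) else 0) - α m) * (G m (a m) - G m (Y ω)) ∂P)
      + c * (∑ m ∈ Finset.Icc 1 (k - 1), p m / (1 - α m)
          * ∫ ω, (((if a m < Y ω then (1:ℝ) else 0) - (1 - α m)) * a m
            - (if a m < Y ω then (1:ℝ) else 0) * Y ω) ∂P) := by
    rw [Finset.mul_sum, Finset.mul_sum, ← Finset.sum_add_distrib, ← Finset.sum_add_distrib]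
    exact Finset.sum_le_sum hperm
  have hsum_lt : (∃ m ∈ Finset.Icc 1 (k - 1), a m ≠ M m) →
      (∑ m ∈ Finset.Icc 1 (k - 1),
        ∫ ω, ((if Y ω ≤ M m then (1:ℝ) else 0) - α m) * (G m (M m) - G m (Y ω)) ∂P)
      + c * (∑ m ∈ Finset.Icc 1 (k - 1), p m / (1 - α m)
          * ∫ ω, (((if M m < Y ω then (1:ℝ) else 0) - (1 - α m)) * M m
            - (if M m < Y ω then (1:ℝ) else 0) * Y ω) ∂P)
      < (∑ m ∈ Finset.Icc 1 (k - 1),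
        ∫ ω, ((if Y ω ≤ a m then (1:ℝ) else 0) - α m) * (G m (a m) - G m (Y ω)) ∂P)
      + c * (∑ m ∈ Finset.Icc 1 (k - 1), p m / (1 - α m)
          * ∫ ω, (((if a m < Y ω then (1:ℝ) else 0) - (1 - α m)) * a m
            - (if a m < Y ω then (1:ℝ) else 0) * Y ω) ∂P) := by
    rintro ⟨m0, hm0K, hm0ne⟩
    rw [Finset.mul_sum, Finset.mul_sum, ← Finset.sum_add_distrib, ← Finset.sum_add_distrib]
    exact Finset.sum_lt_sum hperm ⟨m0, hm0K, hpermlt m0 hm0K hm0ne⟩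
  -- Bregman term
  have hbreg : G k (a k) + c * M k - c * a k ≤ G k (M k) := by
    have h := hGk (a k) (M k)
    rw [mul_sub] at h
    rw [hcdef]
    linarith
  have hbreglt : a k ≠ M k → G k (a k) + c * M k - c * a k < G k (M k) := by
    intro hne
    have h := hGkstrict (a k) (M k) (Ne.symm hne)
    rw [mul_sub] at h
    rw [hcdef]
    linarith
  -- finish: case on where a differs from M
  rw [mul_add c (a k)]
  rw [hsumBM] at hsum_le hsum_lt
  obtain ⟨m0, hm0mem, hm0ne⟩ := hex
  by_cases hm0k : m0 = k
  · have hlt := hbreglt (hm0k ▸ hm0ne)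
    linarith [hsum_le]
  · have hm0K : m0 ∈ Finset.Icc 1 (k - 1) := by
      rw [Finset.mem_Icc] at hm0mem ⊢
      omega
    have hlt := hsum_lt ⟨m0, hm0K, hm0ne⟩
    linarith [hbreg]
end

section
/- Let (Ω, 𝔉, P) be a probability space, α ∈ (0,1), and let Y be an integrable real-valued random variable. Then for every λ ∈ ℝ, CVaR_α(Y) ≤ λ + (1/(1−α)) E[(Y − λ)₊], and equality holds for λ = VaR_α(Y); i.e. CVaR_α(Y) = VaR_α(Y) + (1/(1−α)) E[(Y − VaR_α(Y))₊] = min_{λ ∈ ℝ} { λ + (1/(1−α)) E[(Y − λ)₊] }. -/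
open MeasureTheory

section RUauxSec

open ProbabilityTheory Filter Topology Set

namespace RUaux

variable (μ : Measure ℝ) [IsProbabilityMeasure μ]

noncomputable def q (u : ℝ) : ℝ := sInf {x | u ≤ cdf μ x}

omit [IsProbabilityMeasure μ] in
lemma nonempty_S {u : ℝ} (hu : u < 1) : {x : ℝ | u ≤ cdf μ x}.Nonempty := by
  have h : ∀ᶠ x in atTop, u < cdf μ x :=
    (tendsto_cdf_atTop (μ := μ)).eventually (eventually_gt_nhds hu)
  obtain ⟨x, hx⟩ := h.exists
  exact ⟨x, hx.le⟩

omit [IsProbabilityMeasure μ] in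
lemma bddBelow_S {u : ℝ} (hu : 0 < u) : BddBelow {x : ℝ | u ≤ cdf μ x} := by
  have h : ∀ᶠ x in atBot, cdf μ x < u :=
    (tendsto_cdf_atBot (μ := μ)).eventually (eventually_lt_nhds hu)
  obtain ⟨x₀, hx₀⟩ := h.exists
  refine ⟨x₀, fun y hy => ?_⟩
  by_contra hxy
  push_neg at hxy
  exact absurd (hy.trans ((cdf μ).mono hxy.le)) (not_le.mpr hx₀)

omit [IsProbabilityMeasure μ] in
lemma le_cdf_q {u : ℝ} (hu : u ∈ Set.Ioo (0:ℝ) 1) : u ≤ cdf μ (q μ u) := by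
  have hne := nonempty_S μ hu.2
  have hbdd := bddBelow_S μ hu.1
  have hcl : q μ u ∈ closure {x : ℝ | u ≤ cdf μ x} := csInf_mem_closure hne hbdd
  have hnb : (𝓝[{x : ℝ | u ≤ cdf μ x}] (q μ u)).NeBot :=
    mem_closure_iff_nhdsWithin_neBot.mp hcl
  have hsub : {x : ℝ | u ≤ cdf μ x} ⊆ Ici (q μ u) := fun x hx => csInf_le hbdd hx
  have htend : Tendsto (cdf μ) (𝓝[{x : ℝ | u ≤ cdf μ x}] (q μ u)) (𝓝 (cdf μ (q μ u))) :=
    ((cdf μ).right_continuous (q μ u)).mono_left (nhdsWithin_mono _ hsub)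
  exact ge_of_tendsto htend (eventually_nhdsWithin_of_forall (fun x hx => hx))

omit [IsProbabilityMeasure μ] in
lemma q_le_iff {u : ℝ} (hu : u ∈ Set.Ioo (0:ℝ) 1) (x : ℝ) :
    q μ u ≤ x ↔ u ≤ cdf μ x :=
  ⟨fun h => (le_cdf_q μ hu).trans ((cdf μ).mono h), fun h => csInf_le (bddBelow_S μ hu.1) h⟩

omit [IsProbabilityMeasure μ] in
lemma q_mono : MonotoneOn (q μ) (Set.Ioo 0 1) := fun _ hu _ hv huv =>
  csInf_le_csInf (bddBelow_S μ hu.1) (nonempty_S μ hv.2)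
    (fun _ hx => le_trans huv hx)

omit [IsProbabilityMeasure μ] in
lemma aemeasurable_q : AEMeasurable (q μ) (volume.restrict (Set.Ioo 0 1)) :=
  aemeasurable_restrict_of_monotoneOn measurableSet_Ioo (q_mono μ)

lemma map_q : (volume.restrict (Set.Ioo (0:ℝ) 1)).map (q μ) = μ := by
  have hprob : IsProbabilityMeasure (volume.restrict (Set.Ioo (0:ℝ) 1)) := by
    constructor
    simp [Real.volume_Ioo]
  have hprob2 : IsProbabilityMeasure ((volume.restrict (Set.Ioo (0:ℝ) 1)).map (q μ)) :=
    Measure.isProbabilityMeasure_map (aemeasurable_q μ)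
  refine Measure.ext_of_Iic _ _ (fun x => ?_)
  rw [Measure.map_apply_of_aemeasurable (aemeasurable_q μ) measurableSet_Iic,
    Measure.restrict_apply₀' (measurableSet_Ioo.nullMeasurableSet)]
  have hset : q μ ⁻¹' Iic x ∩ Set.Ioo 0 1 = Iic (cdf μ x) ∩ Set.Ioo 0 1 := by
    ext u
    simp only [mem_inter_iff, mem_preimage, mem_Iic, and_congr_left_iff]
    intro hu
    exact q_le_iff μ hu x
  rw [hset, ← ofReal_cdf]
  rcases lt_or_ge (cdf μ x) 1 with hc | hc
  · have : Iic (cdf μ x) ∩ Set.Ioo 0 1 = Set.Ioc 0 (cdf μ x) := by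
      ext u
      simp only [mem_inter_iff, mem_Iic, mem_Ioo, mem_Ioc]
      constructor
      · rintro ⟨h1, h2, _⟩; exact ⟨h2, h1⟩
      · rintro ⟨h1, h2⟩; exact ⟨h2, h1, lt_of_le_of_lt h2 hc⟩
    rw [this, Real.volume_Ioc, sub_zero]
  · have hc1 : cdf μ x = 1 := le_antisymm (cdf_le_one (μ := μ) x) hc
    have : Iic (cdf μ x) ∩ Set.Ioo 0 1 = Set.Ioo (0:ℝ) 1 := by
      rw [inter_eq_right]
      exact fun u hu => le_of_lt (lt_of_lt_of_le hu.2 hc)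
    rw [this, Real.volume_Ioo, hc1]
    norm_num

end RUaux

end RUauxSec

open ProbabilityTheory

/-- Rockafellar–Uryasev representation: `CVaR_α(Y) ≤ λ + (1/(1−α)) E[(Y − λ)₊]` for every
`λ`, with equality at `λ = VaR_α(Y)`; hence the minimum over `λ` equals `CVaR_α(Y)`. -/
theorem cvar_rockafellar_uryasev {Ω : Type*} [MeasurableSpace Ω] (P : Measure Ω)
    [IsProbabilityMeasure P] (α : ℝ) (hα : α ∈ Set.Ioo (0:ℝ) 1)
    (Y : Ω → ℝ) (hYm : Measurable Y) (hY : Integrable Y P) :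
    (∀ l : ℝ, CVaR P Y α ≤ l + (1 - α)⁻¹ * ∫ ω, max (Y ω - l) 0 ∂P) ∧
    CVaR P Y α = VaR P Y α + (1 - α)⁻¹ * ∫ ω, max (Y ω - VaR P Y α) 0 ∂P := by
  set μ := P.map Y with hμ
  haveI : IsProbabilityMeasure μ := Measure.isProbabilityMeasure_map hYm.aemeasurable
  set q : ℝ → ℝ := RUaux.q μ with hqdef
  have hVaR : ∀ u : ℝ, VaR P Y u = q u := by
    intro u
    have hsets : {x : ℝ | u ≤ (P {ω | Y ω ≤ x}).toReal} = {x : ℝ | u ≤ cdf μ x} := by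
      ext x
      have : P {ω | Y ω ≤ x} = μ (Set.Iic x) := by
        rw [hμ, Measure.map_apply hYm measurableSet_Iic]; rfl
      simp [Set.mem_setOf_eq, this, cdf_eq_real, measureReal_def]
    rw [VaR, hsets]; rfl
  have hq := RUaux.aemeasurable_q μ
  have hmap : (volume.restrict (Set.Ioo (0:ℝ) 1)).map q = μ := RUaux.map_q μ
  have h1α : (0:ℝ) < 1 - α := by linarith [hα.2]
  -- transform integrals
  have hint_transform : ∀ g : ℝ → ℝ, Measurable g →
      ∫ ω, g (Y ω) ∂P = ∫ u in Set.Ioo (0:ℝ) 1, g (q u) := by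
    intro g hg
    rw [← integral_map hYm.aemeasurable hg.aestronglyMeasurable, ← hμ, ← hmap,
      integral_map hq hg.aestronglyMeasurable]
  -- integrability of q on (0,1)
  have hYintμ : Integrable id μ := by
    rw [hμ, integrable_map_measure aestronglyMeasurable_id hYm.aemeasurable]
    exact hY
  have hqint : IntegrableOn q (Set.Ioo (0:ℝ) 1) volume := by
    have h0 : Integrable id ((volume.restrict (Set.Ioo (0:ℝ) 1)).map q) := by
      rw [hmap]; exact hYintμ
    have h := (integrable_map_measure aestronglyMeasurable_id hq).mp h0
    exact h
  have hconst : ∀ (l : ℝ), IntegrableOn (fun _ : ℝ => l) (Set.Ioo (0:ℝ) 1) volume := by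
    intro l
    exact integrableOn_const (measure_Ioo_lt_top.ne)
  have hmax : ∀ l : ℝ, IntegrableOn (fun u => max (q u - l) 0) (Set.Ioo (0:ℝ) 1) volume :=
    fun l => (hqint.sub (hconst l)).pos_part
  have hqintα : IntegrableOn q (Set.Ioo α 1) volume :=
    hqint.mono_set (Set.Ioo_subset_Ioo hα.1.le le_rfl)
  have hmaxα : ∀ l : ℝ, IntegrableOn (fun u => max (q u - l) 0) (Set.Ioo α 1) volume :=
    fun l => (hmax l).mono_set (Set.Ioo_subset_Ioo hα.1.le le_rfl)
  -- interval integral identities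
  have hII : ∀ f : ℝ → ℝ, IntegrableOn f (Set.Ioo α 1) volume →
      ∫ u in α..1, f u = ∫ u in Set.Ioo α 1, f u := by
    intro f hf
    rw [intervalIntegral.integral_of_le hα.2.le, integral_Ioc_eq_integral_Ioo]
  have hE : ∀ l : ℝ, ∫ ω, max (Y ω - l) 0 ∂P = ∫ u in Set.Ioo (0:ℝ) 1, max (q u - l) 0 := by
    intro l
    exact hint_transform (fun y => max (y - l) 0)
      ((measurable_id.sub_const l).max measurable_const)
  have hsplitq : ∀ l : ℝ, ∫ u in Set.Ioo α 1, q u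
      = (∫ u in Set.Ioo α 1, (q u - l)) + (1 - α) * l := by
    intro l
    rw [integral_sub hqintα ((hconst l).mono_set (Set.Ioo_subset_Ioo hα.1.le le_rfl))]
    rw [setIntegral_const, Real.volume_real_Ioo_of_le (by linarith [hα.2]), smul_eq_mul]
    ring
  have hCVaR : CVaR P Y α = (1 - α)⁻¹ * ∫ u in Set.Ioo α 1, q u := by
    rw [CVaR]
    congr 1
    rw [← hII q hqintα]
    exact intervalIntegral.integral_congr (fun u _ => hVaR u)
  -- the main inequality on the (0,1) side
  have hineq : ∀ l : ℝ, ∫ u in Set.Ioo α 1, (q u - l)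
      ≤ ∫ u in Set.Ioo (0:ℝ) 1, max (q u - l) 0 := by
    intro l
    calc ∫ u in Set.Ioo α 1, (q u - l) ≤ ∫ u in Set.Ioo α 1, max (q u - l) 0 := by
          refine integral_mono (hqintα.sub ((hconst l).mono_set
            (Set.Ioo_subset_Ioo hα.1.le le_rfl))) (hmaxα l) ?_
          intro u
          exact le_max_left _ _
      _ ≤ ∫ u in Set.Ioo (0:ℝ) 1, max (q u - l) 0 := by
          refine setIntegral_mono_set (hmax l) ?_ ?_
          · exact Filter.Eventually.of_forall (fun u => le_max_right _ _)
          · exact HasSubset.Subset.eventuallyLE (Set.Ioo_subset_Ioo hα.1.le le_rfl)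
  constructor
  · intro l
    rw [hCVaR, hE l, hsplitq l]
    have h2 : (∫ u in Set.Ioo α 1, (q u - l)) + (1 - α) * l
        ≤ (∫ u in Set.Ioo (0:ℝ) 1, max (q u - l) 0) + (1 - α) * l := by
      linarith [hineq l]
    calc (1 - α)⁻¹ * ((∫ u in Set.Ioo α 1, (q u - l)) + (1 - α) * l)
        ≤ (1 - α)⁻¹ * ((∫ u in Set.Ioo (0:ℝ) 1, max (q u - l) 0) + (1 - α) * l) :=
          mul_le_mul_of_nonneg_left h2 (inv_nonneg.mpr h1α.le)
      _ = l + (1 - α)⁻¹ * ∫ u in Set.Ioo (0:ℝ) 1, max (q u - l) 0 := by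
          field_simp
          ring
  · -- equality at l = VaR = q α
    rw [hVaR α, hE (q α), hCVaR, hsplitq (q α)]
    have hsplitset : Set.Ioo (0:ℝ) 1 = Set.Ioc 0 α ∪ Set.Ioo α 1 :=
      (Set.Ioc_union_Ioo_eq_Ioo hα.1.le hα.2).symm
    have hdisj : Disjoint (Set.Ioc (0:ℝ) α) (Set.Ioo α 1) := by
      apply Set.disjoint_left.mpr
      rintro u ⟨_, h2⟩ ⟨h3, _⟩
      exact absurd h3 (not_lt.mpr h2)
    have hmaxeq : ∫ u in Set.Ioo (0:ℝ) 1, max (q u - q α) 0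
        = ∫ u in Set.Ioo α 1, (q u - q α) := by
      rw [hsplitset, setIntegral_union hdisj measurableSet_Ioo
        ((hmax (q α)).mono_set (by rw [hsplitset]; exact Set.subset_union_left))
        ((hmax (q α)).mono_set (by rw [hsplitset]; exact Set.subset_union_right))]
      have hzero : ∫ u in Set.Ioc (0:ℝ) α, max (q u - q α) 0 = 0 := by
        apply setIntegral_eq_zero_of_forall_eq_zero
        intro u hu
        have huq : q u ≤ q α := RUaux.q_mono μ ⟨hu.1, hu.2.trans_lt hα.2⟩ hα hu.2
        simp [max_eq_right (sub_nonpos.mpr huq)]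
      have heq2 : ∫ u in Set.Ioo α 1, max (q u - q α) 0 = ∫ u in Set.Ioo α 1, (q u - q α) := by
        apply setIntegral_congr_fun measurableSet_Ioo
        intro u hu
        have huq : q α ≤ q u := RUaux.q_mono μ hα ⟨hα.1.trans hu.1, hu.2⟩ hu.1.le
        simp [max_eq_left (sub_nonneg.mpr huq)]
      rw [hzero, heq2, zero_add]
    rw [hmaxeq]
    field_simp
    ring
end

section
/- Let (Ω, 𝔉, P) be a probability space, α ∈ (0,1), and let Y be an integrable real-valued random variable. Then the conditional value-at-risk admits the dual representation CVaR_α(Y) = sup { E[Y ξ] : ξ : Ω → ℝ measurable, 0 ≤ ξ ≤ 1/(1−α) almost surely, E[ξ] = 1 }. -/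
open MeasureTheory

section CVaRAux

open Set Filter ProbabilityTheory
open scoped Topology ENNReal

variable {Ω : Type*} [MeasurableSpace Ω] {P : Measure Ω} [IsProbabilityMeasure P] {Y : Ω → ℝ}

lemma F_eq (hYm : Measurable Y) (t : ℝ) :
    (P {ω | Y ω ≤ t}).toReal = cdf (P.map Y) t := by
  haveI : IsProbabilityMeasure (P.map Y) := Measure.isProbabilityMeasure_map hYm.aemeasurable
  rw [cdf_eq_real, measureReal_def, Measure.map_apply hYm measurableSet_Iic]
  rfl

lemma var_le_iff (hYm : Measurable Y) {u t : ℝ} (hu0 : 0 < u) (hu1 : u < 1) :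
    VaR P Y u ≤ t ↔ u ≤ (P {ω | Y ω ≤ t}).toReal := by
  haveI : IsProbabilityMeasure (P.map Y) := Measure.isProbabilityMeasure_map hYm.aemeasurable
  set G := cdf (P.map Y) with hGdef
  have hFG : ∀ s : ℝ, (P {ω | Y ω ≤ s}).toReal = G s := F_eq hYm
  have hS : {x : ℝ | u ≤ (P {ω | Y ω ≤ x}).toReal} = {x : ℝ | u ≤ G x} := by
    ext x; simp [hFG]
  have hne : {x : ℝ | u ≤ G x}.Nonempty := by
    have h := (tendsto_cdf_atTop (P.map Y)).eventually (eventually_gt_nhds hu1)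
    rcases h.exists with ⟨x, hx⟩
    exact ⟨x, hx.le⟩
  have hbdd : BddBelow {x : ℝ | u ≤ G x} := by
    have h := (tendsto_cdf_atBot (P.map Y)).eventually (eventually_lt_nhds hu0)
    rcases h.exists with ⟨x₀, hx₀⟩
    refine ⟨x₀, fun x hx => ?_⟩
    by_contra hlt
    push_neg at hlt
    exact absurd (le_trans hx (monotone_cdf _ hlt.le)) (not_le.2 hx₀)
  have hmem : u ≤ G (sInf {x : ℝ | u ≤ G x}) := by
    set m := sInf {x : ℝ | u ≤ G x} with hm
    by_contra hlt
    push_neg at hlt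
    have hcont : ContinuousWithinAt G (Ici m) m := G.right_continuous m
    have hev : ∀ᶠ x in 𝓝[Ici m] m, G x < u :=
      hcont.eventually (eventually_lt_nhds hlt)
    rcases (mem_nhdsGE_iff_exists_Ico_subset).1 hev with ⟨b, hb, hsub⟩
    rcases Real.lt_sInf_add_pos hne (sub_pos.2 hb) with ⟨x, hxS, hxlt⟩
    have hxm : m ≤ x := csInf_le hbdd hxS
    have : G x < u := hsub ⟨hxm, by linarith⟩
    exact absurd hxS (not_le.2 this)
  constructor
  · intro h
    rw [hFG]
    exact le_trans hmem (monotone_cdf _ (by rw [VaR, hS] at h; exact h))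
  · intro h
    rw [VaR, hS]
    exact csInf_le hbdd (by rw [hFG] at h; exact h)

lemma lt_var_iff (hYm : Measurable Y) {u t : ℝ} (hu0 : 0 < u) (hu1 : u < 1) :
    t < VaR P Y u ↔ (P {ω | Y ω ≤ t}).toReal < u := by
  rw [← not_le, ← not_le, not_iff_not, var_le_iff hYm hu0 hu1]

lemma var_mono (hYm : Measurable Y) {u v : ℝ} (hu0 : 0 < u) (huv : u ≤ v) (hv1 : v < 1) :
    VaR P Y u ≤ VaR P Y v := by
  rw [var_le_iff hYm hu0 (lt_of_le_of_lt huv hv1)]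
  exact le_trans huv ((var_le_iff hYm (lt_of_lt_of_le hu0 huv) hv1).1 le_rfl)

lemma F_measurable (hYm : Measurable Y) :
    Measurable (fun t : ℝ => (P {ω | Y ω ≤ t}).toReal) := by
  apply Monotone.measurable
  intro s t hst
  exact ENNReal.toReal_mono (measure_ne_top _ _)
    (measure_mono (fun ω hω => le_trans hω hst))

lemma ofReal_one_sub_F (hYm : Measurable Y) (t : ℝ) :
    ENNReal.ofReal (1 - (P {ω | Y ω ≤ t}).toReal) = P {ω | t < Y ω} := by
  have hc : {ω | t < Y ω} = {ω | Y ω ≤ t}ᶜ := by ext ω; simp [not_le]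
  rw [hc, measure_compl (measurableSet_le hYm measurable_const) (measure_ne_top _ _), measure_univ]
  rw [ENNReal.ofReal_sub _ ENNReal.toReal_nonneg, ENNReal.ofReal_one,
    ENNReal.ofReal_toReal (measure_ne_top _ _)]

/-- Key Fubini identity: `∫_α^1 (q(u) - q(α)) du = E[(Y - q(α))⁺]` on the lintegral level. -/
lemma key_lintegral (hYm : Measurable Y) {α : ℝ} (hα : α ∈ Set.Ioo (0:ℝ) 1) :
    ∫⁻ u in Ioo α 1, ENNReal.ofReal (VaR P Y u - VaR P Y α) =
      ∫⁻ ω, ENNReal.ofReal (max (Y ω - VaR P Y α) 0) ∂P := by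
  set q := VaR P Y α with hq
  set F : ℝ → ℝ := fun t => (P {ω | Y ω ≤ t}).toReal with hF
  have hFm : Measurable F := F_measurable hYm
  have hFq : ∀ t, q ≤ t ↔ α ≤ F t := fun t => var_le_iff hYm hα.1 hα.2
  -- Part I : the u-integral equals ∫⁻ t in Ici q, ofReal (1 - F t)
  have partI : ∫⁻ u in Ioo α 1, ENNReal.ofReal (VaR P Y u - q) =
      ∫⁻ t in Ici q, ENNReal.ofReal (1 - F t) := by
    set A : Set (ℝ × ℝ) := {p | q ≤ p.2 ∧ F p.2 < p.1} with hA
    have hAm : MeasurableSet A := by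
      apply MeasurableSet.inter
      · exact measurable_snd measurableSet_Ici
      · exact measurableSet_lt (hFm.comp measurable_snd) measurable_fst
    have h1 : ((volume.restrict (Ioo α 1)).prod volume) A =
        ∫⁻ u in Ioo α 1, ENNReal.ofReal (VaR P Y u - q) := by
      rw [Measure.prod_apply hAm]
      apply setLIntegral_congr_fun measurableSet_Ioo
      intro u hu
      have hslice : (Prod.mk u ⁻¹' A) = Ico q (VaR P Y u) := by
        ext t
        have hlt : t < VaR P Y u ↔ F t < u := by
          rw [← not_le, ← not_le, not_iff_not,
            var_le_iff hYm (lt_trans hα.1 hu.1) hu.2]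
        simp only [hA, mem_preimage, mem_setOf_eq, mem_Ico]
        exact and_congr Iff.rfl hlt.symm
      dsimp only
      rw [hslice, Real.volume_Ico]
    have h2 : ((volume.restrict (Ioo α 1)).prod volume) A =
        ∫⁻ t in Ici q, ENNReal.ofReal (1 - F t) := by
      rw [Measure.prod_apply_symm hAm]
      have hpt : ∀ t : ℝ, (volume.restrict (Ioo α 1)) ((fun u => (u, t)) ⁻¹' A) =
          (Ici q).indicator (fun t => ENNReal.ofReal (1 - F t)) t := by
        intro t
        by_cases ht : q ≤ t
        · have hFt : α ≤ F t := (hFq t).1 ht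
          have hset : ((fun u => (u, t)) ⁻¹' A) = Ioi (F t) := by
            ext u; simp [hA, ht]
          rw [hset, indicator_of_mem (show t ∈ Ici q from ht), Measure.restrict_apply measurableSet_Ioi]
          have : Ioi (F t) ∩ Ioo α 1 = Ioo (F t) 1 := by
            ext u
            constructor
            · rintro ⟨h1, h2, h3⟩; exact ⟨h1, h3⟩
            · rintro ⟨h1, h2⟩; exact ⟨h1, lt_of_le_of_lt hFt h1, h2⟩
          rw [this, Real.volume_Ioo]
        · have hset : ((fun u => (u, t)) ⁻¹' A) = ∅ := by
            ext u; simp [hA, ht]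
          rw [hset, indicator_of_notMem (show t ∉ Ici q from ht), measure_empty]
      rw [lintegral_congr hpt, lintegral_indicator measurableSet_Ici _]
    rw [← h1, h2]
  -- Part II : the Ω-integral equals the same thing
  have partII : ∫⁻ ω, ENNReal.ofReal (max (Y ω - q) 0) ∂P =
      ∫⁻ t in Ici q, ENNReal.ofReal (1 - F t) := by
    set B : Set (Ω × ℝ) := {p | q ≤ p.2 ∧ p.2 < Y p.1} with hB
    have hBm : MeasurableSet B := by
      apply MeasurableSet.inter
      · exact measurable_snd measurableSet_Ici
      · exact measurableSet_lt measurable_snd (hYm.comp measurable_fst)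
    have h1 : (P.prod volume) B = ∫⁻ ω, ENNReal.ofReal (max (Y ω - q) 0) ∂P := by
      rw [Measure.prod_apply hBm]
      apply lintegral_congr
      intro ω
      have hslice : (Prod.mk ω ⁻¹' B) = Ico q (Y ω) := by
        ext t; simp [hB, mem_Ico]
      rw [hslice, Real.volume_Ico]
      rcases le_total (Y ω - q) 0 with h | h
      · rw [ENNReal.ofReal_of_nonpos h, max_eq_right h, ENNReal.ofReal_zero]
      · rw [max_eq_left h]
    have h2 : (P.prod volume) B = ∫⁻ t in Ici q, ENNReal.ofReal (1 - F t) := by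
      rw [Measure.prod_apply_symm hBm]
      have hpt : ∀ t : ℝ, P ((fun ω => (ω, t)) ⁻¹' B) =
          (Ici q).indicator (fun t => ENNReal.ofReal (1 - F t)) t := by
        intro t
        by_cases ht : q ≤ t
        · have hset : ((fun ω => (ω, t)) ⁻¹' B) = {ω | t < Y ω} := by
            ext ω; simp [hB, ht]
          rw [hset, indicator_of_mem (show t ∈ Ici q from ht), ofReal_one_sub_F hYm]
        · have hset : ((fun ω => (ω, t)) ⁻¹' B) = ∅ := by
            ext ω; simp [hB, ht]
          rw [hset, indicator_of_notMem (show t ∉ Ici q from ht), measure_empty]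
      rw [lintegral_congr hpt, lintegral_indicator measurableSet_Ici _]
    rw [← h1, h2]
  rw [partI, partII]

lemma cvar_eq (hYm : Measurable Y) (hY : Integrable Y P) {α : ℝ} (hα : α ∈ Set.Ioo (0:ℝ) 1) :
    CVaR P Y α = VaR P Y α + (1 - α)⁻¹ * ∫ ω, max (Y ω - VaR P Y α) 0 ∂P := by
  set q := VaR P Y α with hq
  set E := ∫ ω, max (Y ω - q) 0 ∂P with hE
  have hint : Integrable (fun ω => max (Y ω - q) 0) P := (hY.sub (integrable_const q)).pos_part
  have hE0 : 0 ≤ E := integral_nonneg fun ω => le_max_right _ _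
  have hJ : ∫⁻ ω, ENNReal.ofReal (max (Y ω - q) 0) ∂P = ENNReal.ofReal E :=
    (ofReal_integral_eq_lintegral_ofReal hint
      (ae_of_all _ fun ω => le_max_right _ _)).symm
  have hI : ∫⁻ u in Ioo α 1, ENNReal.ofReal (VaR P Y u - q) = ENNReal.ofReal E := by
    rw [key_lintegral hYm hα, hJ]
  -- a.e. measurability and nonnegativity of g := VaR · - q on Ioo α 1
  have hmono : MonotoneOn (fun u => VaR P Y u) (Ioo α 1) := fun u hu v hv huv =>
    var_mono hYm (lt_trans hα.1 hu.1) huv hv.2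
  have haem : AEMeasurable (fun u => VaR P Y u) (volume.restrict (Ioo α 1)) :=
    aemeasurable_restrict_of_monotoneOn measurableSet_Ioo hmono
  have hnn : ∀ᵐ u ∂(volume.restrict (Ioo α 1)), 0 ≤ VaR P Y u - q := by
    filter_upwards [ae_restrict_mem measurableSet_Ioo] with u hu
    exact sub_nonneg.2 (var_mono hYm hα.1 hu.1.le hu.2)
  have haem' : AEMeasurable (fun u => VaR P Y u - q) (volume.restrict (Ioo α 1)) :=
    haem.sub aemeasurable_const
  have hfin : HasFiniteIntegral (fun u => VaR P Y u - q) (volume.restrict (Ioo α 1)) := by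
    rw [hasFiniteIntegral_iff_norm]
    have : ∫⁻ u in Ioo α 1, ENNReal.ofReal ‖VaR P Y u - q‖ =
        ∫⁻ u in Ioo α 1, ENNReal.ofReal (VaR P Y u - q) := by
      apply lintegral_congr_ae
      filter_upwards [hnn] with u hu
      rw [Real.norm_of_nonneg hu]
    rw [this, hI]
    exact ENNReal.ofReal_lt_top
  have hgint : Integrable (fun u => VaR P Y u - q) (volume.restrict (Ioo α 1)) :=
    ⟨haem'.aestronglyMeasurable, hfin⟩
  have hgval : ∫ u in Ioo α 1, (VaR P Y u - q) = E := by
    rw [integral_eq_lintegral_of_nonneg_ae hnn haem'.aestronglyMeasurable, hI,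
      ENNReal.toReal_ofReal hE0]
  have hVint : Integrable (fun u => VaR P Y u) (volume.restrict (Ioo α 1)) := by
    have h := hgint.add (integrable_const q)
    have : (fun u => VaR P Y u) = fun u => (VaR P Y u - q) + q := by funext u; ring
    rw [this]; exact h
  have hVval : ∫ u in Ioo α 1, VaR P Y u = E + (1 - α) * q := by
    have : ∫ u in Ioo α 1, VaR P Y u = ∫ u in Ioo α 1, ((VaR P Y u - q) + q) := by
      congr 1; funext u; ring
    rw [this, integral_add hgint (integrable_const q), hgval, integral_const,
      measureReal_restrict_apply_univ, Real.volume_real_Ioo_of_le (by linarith [hα.2] : α ≤ 1)]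
    simp [smul_eq_mul]
  have hIoc : ∫ u in α..1, VaR P Y u = ∫ u in Ioo α 1, VaR P Y u := by
    rw [intervalIntegral.integral_of_le hα.2.le, integral_Ioc_eq_integral_Ioo]
  rw [CVaR, hIoc, hVval]
  have h1α : (1 : ℝ) - α ≠ 0 := by linarith [hα.2]
  field_simp
  ring

/-- Upper bound part of the duality. -/
lemma dual_le (hYm : Measurable Y) (hY : Integrable Y P) {α : ℝ} (hα : α ∈ Set.Ioo (0:ℝ) 1)
    {ξ : Ω → ℝ} (hξm : Measurable ξ) (hξb : ∀ᵐ ω ∂P, 0 ≤ ξ ω ∧ ξ ω ≤ (1 - α)⁻¹)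
    (hξi : (∫ ω, ξ ω ∂P) = 1) :
    ∫ ω, Y ω * ξ ω ∂P ≤ VaR P Y α + (1 - α)⁻¹ * ∫ ω, max (Y ω - VaR P Y α) 0 ∂P := by
  set q := VaR P Y α with hq
  set c : ℝ := (1 - α)⁻¹ with hc
  have hc0 : 0 < c := inv_pos.2 (by linarith [hα.2])
  have hint : Integrable (fun ω => max (Y ω - q) 0) P := (hY.sub (integrable_const q)).pos_part
  -- integrability of (Y - q) * ξ
  have hmeas : AEStronglyMeasurable (fun ω => (Y ω - q) * ξ ω) P :=
    ((hYm.sub measurable_const).mul hξm).aestronglyMeasurable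
  have hintYξ : Integrable (fun ω => (Y ω - q) * ξ ω) P := by
    apply Integrable.mono' (((hY.sub (integrable_const q)).norm).const_mul c) hmeas
    filter_upwards [hξb] with ω hω
    rw [norm_mul, Real.norm_of_nonneg hω.1]
    calc ‖Y ω - q‖ * ξ ω ≤ ‖Y ω - q‖ * c :=
          mul_le_mul_of_nonneg_left hω.2 (norm_nonneg _)
      _ = c * ‖Y ω - q‖ := mul_comm _ _
  have hintξ : Integrable ξ P := by
    apply Integrable.mono' (integrable_const c) hξm.aestronglyMeasurable
    filter_upwards [hξb] with ω hω
    rw [Real.norm_of_nonneg hω.1]; exact hω.2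
  have hintqξ : Integrable (fun ω => q * ξ ω) P := hintξ.const_mul q
  have hsplit : ∫ ω, Y ω * ξ ω ∂P = (∫ ω, (Y ω - q) * ξ ω ∂P) + q := by
    have : (fun ω => Y ω * ξ ω) = fun ω => (Y ω - q) * ξ ω + q * ξ ω := by
      funext ω; ring
    rw [this, integral_add hintYξ hintqξ, integral_const_mul, hξi, mul_one]
  rw [hsplit]
  have hmono : ∫ ω, (Y ω - q) * ξ ω ∂P ≤ ∫ ω, c * max (Y ω - q) 0 ∂P := by
    apply integral_mono_ae hintYξ (hint.const_mul c)
    filter_upwards [hξb] with ω hω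
    rcases le_total q (Y ω) with h | h
    · have h1 : Y ω - q ≥ 0 := by linarith
      have : max (Y ω - q) 0 = Y ω - q := max_eq_left h1
      rw [this]
      calc (Y ω - q) * ξ ω ≤ (Y ω - q) * c := mul_le_mul_of_nonneg_left hω.2 h1
        _ = c * (Y ω - q) := mul_comm _ _
    · have h1 : Y ω - q ≤ 0 := by linarith
      have h2 : (Y ω - q) * ξ ω ≤ 0 := mul_nonpos_of_nonpos_of_nonneg h1 hω.1
      exact le_trans h2 (mul_nonneg hc0.le (le_max_right _ _))
  calc (∫ ω, (Y ω - q) * ξ ω ∂P) + q ≤ (∫ ω, c * max (Y ω - q) 0 ∂P) + q := by linarith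
    _ = q + c * ∫ ω, max (Y ω - q) 0 ∂P := by rw [integral_const_mul]; ring

/-- Existence of a maximizer. -/
lemma dual_attained (hYm : Measurable Y) (hY : Integrable Y P) {α : ℝ}
    (hα : α ∈ Set.Ioo (0:ℝ) 1) :
    ∃ ξ : Ω → ℝ, Measurable ξ ∧ (∀ᵐ ω ∂P, 0 ≤ ξ ω ∧ ξ ω ≤ (1 - α)⁻¹) ∧
      (∫ ω, ξ ω ∂P) = 1 ∧
      VaR P Y α + (1 - α)⁻¹ * (∫ ω, max (Y ω - VaR P Y α) 0 ∂P) = ∫ ω, Y ω * ξ ω ∂P := by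
  set q := VaR P Y α with hq
  set c : ℝ := (1 - α)⁻¹ with hc
  have h1α : (0:ℝ) < 1 - α := by linarith [hα.2]
  have hc0 : 0 < c := inv_pos.2 h1α
  set A : Set Ω := {ω | q < Y ω} with hA
  set B : Set Ω := {ω | Y ω = q} with hB
  have hAm : MeasurableSet A := measurableSet_lt measurable_const hYm
  have hBm : MeasurableSet B := hYm (measurableSet_singleton q)
  set a : ℝ := (P A).toReal with ha
  set b : ℝ := (P B).toReal with hb
  have ha0 : 0 ≤ a := ENNReal.toReal_nonneg
  have hb0 : 0 ≤ b := ENNReal.toReal_nonneg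
  -- a = 1 - F q ≤ 1 - α
  have hFq : α ≤ (P {ω | Y ω ≤ q}).toReal := (var_le_iff hYm hα.1 hα.2).1 le_rfl
  have haval : a = 1 - (P {ω | Y ω ≤ q}).toReal := by
    have hcompl : A = {ω | Y ω ≤ q}ᶜ := by ext ω; simp [hA, not_le]
    rw [ha, hcompl, measure_compl (measurableSet_le hYm measurable_const) (measure_ne_top _ _),
      measure_univ, ENNReal.toReal_sub_of_le prob_le_one ENNReal.one_ne_top, ENNReal.toReal_one]
  have hca : c * a ≤ 1 := by
    have : a ≤ 1 - α := by rw [haval]; linarith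
    calc c * a ≤ c * (1 - α) := mul_le_mul_of_nonneg_left this hc0.le
      _ = 1 := inv_mul_cancel₀ (ne_of_gt h1α)
  -- P{Y < q} ≤ α hence a + b ≥ 1 - α
  have hlower : 1 - α ≤ a + b := by
    have hUnion : {ω | Y ω < q} = ⋃ n : ℕ, {ω | Y ω ≤ q - 1 / (n + 1)} := by
      ext ω
      simp only [mem_setOf_eq, mem_iUnion]
      constructor
      · intro h
        obtain ⟨n, hn⟩ := exists_nat_one_div_lt (sub_pos.2 h)
        exact ⟨n, by push_cast at hn ⊢; linarith⟩
      · rintro ⟨n, hn⟩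
        have : (0:ℝ) < 1 / (n + 1) := by positivity
        linarith
    have hmem : ∀ n : ℕ, P {ω | Y ω ≤ q - 1 / (n + 1)} ≤ ENNReal.ofReal α := by
      intro n
      have hlt : q - 1 / ((n:ℝ) + 1) < q := by
        have : (0:ℝ) < 1 / ((n:ℝ) + 1) := by positivity
        linarith
      have hFlt : (P {ω | Y ω ≤ q - 1 / (n + 1)}).toReal < α := by
        by_contra hcon
        push_neg at hcon
        exact absurd ((var_le_iff hYm hα.1 hα.2).2 hcon) (not_le.2 hlt)
      calc P {ω | Y ω ≤ q - 1 / (n + 1)}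
          = ENNReal.ofReal ((P {ω | Y ω ≤ q - 1 / (n + 1)}).toReal) :=
            (ENNReal.ofReal_toReal (measure_ne_top _ _)).symm
        _ ≤ ENNReal.ofReal α := ENNReal.ofReal_le_ofReal hFlt.le
    have hmono' : Monotone (fun n : ℕ => {ω | Y ω ≤ q - 1 / (n + 1)}) := by
      intro m n h ω hω
      simp only [mem_setOf_eq] at hω ⊢
      have hmn : (m:ℝ) ≤ (n:ℝ) := Nat.cast_le.2 h
      have : 1 / ((n:ℝ) + 1) ≤ 1 / ((m:ℝ) + 1) :=
        one_div_le_one_div_of_le (by positivity) (by linarith)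
      linarith
    have hdir : Directed (· ⊆ ·) (fun n : ℕ => {ω | Y ω ≤ q - 1 / (n + 1)}) :=
      hmono'.directed_le
    have hPlt : P {ω | Y ω < q} ≤ ENNReal.ofReal α := by
      rw [hUnion, hdir.measure_iUnion]
      exact iSup_le hmem
    have hge : {ω | q ≤ Y ω} = {ω | Y ω < q}ᶜ := by ext ω; simp [not_lt]
    have hPge : 1 - ENNReal.ofReal α ≤ P {ω | q ≤ Y ω} := by
      rw [hge, measure_compl (measurableSet_lt hYm measurable_const) (measure_ne_top _ _),
        measure_univ]
      exact tsub_le_tsub_left hPlt 1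
    have hABu : A ∪ B = {ω | q ≤ Y ω} := by
      ext ω; simp only [hA, hB, mem_union, mem_setOf_eq]
      exact ⟨fun h => h.elim le_of_lt (fun h' => le_of_eq h'.symm),
        fun h => (lt_or_eq_of_le h).imp id (fun h' => h'.symm)⟩
    have hdisj : Disjoint A B := by
      rw [Set.disjoint_left]
      intro ω hωA hωB
      simp only [hA, mem_setOf_eq] at hωA
      simp only [hB, mem_setOf_eq] at hωB
      exact absurd hωB (ne_of_gt hωA)
    have hPAB : (P (A ∪ B)).toReal = a + b := by
      rw [measure_union hdisj hBm, ENNReal.toReal_add (measure_ne_top _ _) (measure_ne_top _ _)]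
    have : 1 - α ≤ (P {ω | q ≤ Y ω}).toReal := by
      have h1 : ((1 : ℝ≥0∞) - ENNReal.ofReal α).toReal ≤ (P {ω | q ≤ Y ω}).toReal :=
        ENNReal.toReal_mono (measure_ne_top _ _) hPge
      rwa [ENNReal.toReal_sub_of_le (ENNReal.ofReal_le_one.2 hα.2.le) ENNReal.one_ne_top,
        ENNReal.toReal_one, ENNReal.toReal_ofReal hα.1.le] at h1
    rw [← hPAB, hABu]; exact this
  -- define κ
  set κ : ℝ := if b = 0 then 0 else (1 - c * a) / b with hκ
  have hbc : b = 0 → c * a = 1 := by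
    intro hb0'
    have h1 : a ≤ 1 - α := by rw [haval]; linarith
    have h2 : 1 - α ≤ a := by rw [hb0'] at hlower; linarith
    have : a = 1 - α := le_antisymm h1 h2
    rw [this]; exact inv_mul_cancel₀ (ne_of_gt h1α)
  have hκ0 : 0 ≤ κ := by
    rw [hκ]; split
    · exact le_rfl
    · exact div_nonneg (by linarith) hb0
  have hκc : κ ≤ c := by
    rw [hκ]; split
    · exact hc0.le
    · rename_i hbne
      have hbpos : 0 < b := lt_of_le_of_ne hb0 (Ne.symm hbne)
      rw [div_le_iff₀ hbpos]
      have : 1 ≤ c * (a + b) := by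
        calc (1:ℝ) = c * (1 - α) := (inv_mul_cancel₀ (ne_of_gt h1α)).symm
          _ ≤ c * (a + b) := mul_le_mul_of_nonneg_left hlower hc0.le
      nlinarith
  have hκb : κ * b = 1 - c * a := by
    rw [hκ]; split
    · rename_i hb0'
      rw [hb0', mul_zero, hbc hb0']; ring
    · rename_i hbne
      field_simp
  -- the maximizer
  set ξ : Ω → ℝ := fun ω => if q < Y ω then c else if Y ω = q then κ else 0 with hξ
  have hξrepr : ξ = fun ω => A.indicator (fun _ => c) ω + B.indicator (fun _ => κ) ω := by
    funext ω
    by_cases h1 : q < Y ω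
    · have h2 : Y ω ≠ q := ne_of_gt h1
      simp [hξ, hA, hB, h1, h2, indicator_of_mem, indicator_of_notMem]
    · by_cases h2 : Y ω = q
      · simp [hξ, hA, hB, h1, h2]
      · simp [hξ, hA, hB, h1, h2]
  have hξm : Measurable ξ := by
    rw [hξrepr]
    exact ((measurable_const.indicator hAm).add (measurable_const.indicator hBm))
  have hξbound : ∀ ω, 0 ≤ ξ ω ∧ ξ ω ≤ c := by
    intro ω
    rw [hξ]
    by_cases h1 : q < Y ω
    · simp [h1]; exact hc0.le
    · by_cases h2 : Y ω = q
      · simp [h1, h2]; exact ⟨hκ0, hκc⟩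
      · simp [h1, h2]; exact hc0.le
  have hξint : (∫ ω, ξ ω ∂P) = 1 := by
    rw [hξrepr]
    rw [integral_add ((integrable_const c).indicator hAm) ((integrable_const κ).indicator hBm)]
    rw [integral_indicator_const c hAm, integral_indicator_const κ hBm]
    simp only [smul_eq_mul, ← ha, ← hb]
    calc a * c + b * κ = c * a + κ * b := by ring
      _ = c * a + (1 - c * a) := by rw [hκb]
      _ = 1 := by ring
  -- value of the objective
  set IA : ℝ := ∫ ω in A, Y ω ∂P with hIA
  have hobj : ∫ ω, Y ω * ξ ω ∂P = c * IA + q * κ * b := by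
    have hrepr2 : (fun ω => Y ω * ξ ω) =
        fun ω => A.indicator (fun ω => Y ω * c) ω + B.indicator (fun _ => q * κ) ω := by
      funext ω
      by_cases h1 : q < Y ω
      · have h2 : Y ω ≠ q := ne_of_gt h1
        simp [hξ, hA, hB, h1, h2]
      · by_cases h2 : Y ω = q
        · simp [hξ, hA, hB, h1, h2]
        · simp [hξ, hA, hB, h1, h2]
    rw [hrepr2, integral_add ((hY.mul_const c).indicator hAm)
      ((integrable_const (q * κ)).indicator hBm)]
    rw [integral_indicator hAm, integral_indicator_const (q * κ) hBm]
    rw [integral_mul_const]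
    simp only [smul_eq_mul, measureReal_def, ← hb]
    ring
  -- E = IA - q * a
  have hEval : ∫ ω, max (Y ω - q) 0 ∂P = IA - q * a := by
    have hrepr3 : (fun ω => max (Y ω - q) 0) = fun ω => A.indicator (fun ω => Y ω - q) ω := by
      funext ω
      by_cases h1 : q < Y ω
      · simp [hA, h1, indicator_of_mem, max_eq_left (by linarith : (0:ℝ) ≤ Y ω - q)]
      · have hle : Y ω ≤ q := not_lt.1 h1
        simp [hA, h1, max_eq_right (by linarith : Y ω - q ≤ 0)]
    rw [hrepr3, integral_indicator hAm,
      integral_sub hY.integrableOn integrableOn_const,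
      setIntegral_const]
    simp only [smul_eq_mul, measureReal_def, ← ha]
    ring
  refine ⟨ξ, hξm, ae_of_all _ hξbound, hξint, ?_⟩
  rw [hEval, hobj]
  have hqκb : q * κ * b = q * (1 - c * a) := by rw [mul_assoc, hκb]
  rw [hqκb]; ring

end CVaRAux

/-- Dual representation of the conditional value-at-risk:
`CVaR_α(Y) = sup { E[Yξ] : 0 ≤ ξ ≤ 1/(1−α) a.s., E[ξ] = 1 }`. -/
theorem cvar_dual_representation {Ω : Type*} [MeasurableSpace Ω] (P : Measure Ω)
    [IsProbabilityMeasure P] (α : ℝ) (hα : α ∈ Set.Ioo (0:ℝ) 1)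
    (Y : Ω → ℝ) (hYm : Measurable Y) (hY : Integrable Y P) :
    IsLUB {r : ℝ | ∃ ξ : Ω → ℝ, Measurable ξ ∧
      (∀ᵐ ω ∂P, 0 ≤ ξ ω ∧ ξ ω ≤ (1 - α)⁻¹) ∧
      (∫ ω, ξ ω ∂P) = 1 ∧ r = ∫ ω, Y ω * ξ ω ∂P}
      (CVaR P Y α) := by
  have key := cvar_eq hYm hY hα
  apply IsGreatest.isLUB
  constructor
  · obtain ⟨ξ, h1, h2, h3, h4⟩ := dual_attained hYm hY hα
    exact ⟨ξ, h1, h2, h3, by rw [key]; exact h4⟩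
  · rintro r ⟨ξ, hm, hb, hi, rfl⟩
    rw [key]
    exact dual_le hYm hY hα hm hb hi
end

section
/- Let (Ω, 𝔉, P) be a probability space, α ∈ (0,1), and let X be an integrable real-valued random variable. Set λ* := VaR_α(X) and assume P(X > λ*) = 1 − α. Let Ξ := {ξ : Ω → ℝ measurable : 0 ≤ ξ ≤ 1/(1−α) almost surely}, define the Lagrangian L(ξ, λ) := E[X ξ] − λ (E[ξ] − 1), and set ξ* := (1/(1−α)) 1{X > λ*}. Then (ξ*, λ*) is a saddle-point of L: for every ξ ∈ Ξ and every λ ∈ ℝ, L(ξ, λ*) ≤ L(ξ*, λ*) ≤ L(ξ*, λ), and moreover L(ξ*, λ*) = CVaR_α(X). -/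
open MeasureTheory

/-- The Lagrangian `L(ξ, λ) = E[Xξ] − λ(E[ξ] − 1)`. -/
noncomputable def Lagr {Ω : Type*} [MeasurableSpace Ω] (P : Measure Ω) (X ξ : Ω → ℝ)
    (l : ℝ) : ℝ :=
  (∫ ω, X ω * ξ ω ∂P) - l * ((∫ ω, ξ ω ∂P) - 1)

/-- `ξ* = (1/(1−α)) 1{X > VaR_α(X)}`. -/
noncomputable def xiStar {Ω : Type*} [MeasurableSpace Ω] (P : Measure Ω) (X : Ω → ℝ)
    (α : ℝ) : Ω → ℝ :=
  fun ω => if VaR P X α < X ω then (1 - α)⁻¹ else 0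

/-- `(ξ*, λ*)` with `λ* = VaR_α(X)` and `ξ* = (1/(1−α)) 1{X > λ*}` is a saddle-point of
the Lagrangian over `Ξ = {ξ : 0 ≤ ξ ≤ 1/(1−α) a.s.}`, and its value is `CVaR_α(X)`. -/
theorem cvar_saddle_point {Ω : Type*} [MeasurableSpace Ω] (P : Measure Ω)
    [IsProbabilityMeasure P] (α : ℝ) (hα : α ∈ Set.Ioo (0:ℝ) 1)
    (X : Ω → ℝ) (hXm : Measurable X) (hX : Integrable X P)
    (hmass : (P {ω | VaR P X α < X ω}).toReal = 1 - α) :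
    (∀ ξ : Ω → ℝ, Measurable ξ → (∀ᵐ ω ∂P, 0 ≤ ξ ω ∧ ξ ω ≤ (1 - α)⁻¹) →
      Lagr P X ξ (VaR P X α) ≤ Lagr P X (xiStar P X α) (VaR P X α)) ∧
    (∀ l : ℝ, Lagr P X (xiStar P X α) (VaR P X α) ≤ Lagr P X (xiStar P X α) l) ∧
    Lagr P X (xiStar P X α) (VaR P X α) = CVaR P X α := by
  obtain ⟨hα0, hα1⟩ := hα
  have h1α : (0:ℝ) < 1 - α := by linarith
  have hne : (1:ℝ) - α ≠ 0 := ne_of_gt h1α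
  set l₀ : ℝ := VaR P X α with hl₀def
  set F : ℝ → ℝ := fun x => (P {ω | X ω ≤ x}).toReal with hFdef
  set q : ℝ → ℝ := fun u => sInf {x : ℝ | u ≤ F x} with hqdef
  have hqVaR : ∀ u, VaR P X u = q u := fun u => by
    rw [hqdef]; simp only [hFdef]; rfl
  have hl₀q : l₀ = q α := by rw [hl₀def]; exact hqVaR α
  set μm : Measure ℝ := P.map X with hμm
  haveI : IsProbabilityMeasure μm := Measure.isProbabilityMeasure_map hXm.aemeasurable
  have hFeq : ∀ x, F x = ProbabilityTheory.cdf μm x := by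
    intro x
    rw [ProbabilityTheory.cdf_eq_real, measureReal_def, hμm, Measure.map_apply hXm measurableSet_Iic]
    rfl
  have hFmono : Monotone F := fun a b hab =>
    ENNReal.toReal_mono (measure_ne_top _ _) (measure_mono fun ω (h : X ω ≤ a) => h.trans hab)
  have hFnn : ∀ x, 0 ≤ F x := fun x => by rw [hFdef]; exact ENNReal.toReal_nonneg
  have hFrc : ∀ x, ContinuousWithinAt F (Set.Ici x) x := by
    intro x
    have h := (ProbabilityTheory.cdf μm).right_continuous x
    exact h.congr (fun y _ => hFeq y) (hFeq x)
  have hFbot : Filter.Tendsto F Filter.atBot (nhds 0) :=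
    Filter.Tendsto.congr (fun x => (hFeq x).symm) (ProbabilityTheory.tendsto_cdf_atBot μm)
  have hFtop : Filter.Tendsto F Filter.atTop (nhds 1) :=
    Filter.Tendsto.congr (fun x => (hFeq x).symm) (ProbabilityTheory.tendsto_cdf_atTop μm)
  have hSne : ∀ u : ℝ, u < 1 → {x : ℝ | u ≤ F x}.Nonempty := by
    intro u hu
    obtain ⟨x, hx⟩ := (hFtop.eventually (eventually_ge_nhds hu)).exists
    exact ⟨x, hx⟩
  have hSbdd : ∀ u : ℝ, 0 < u → BddBelow {x : ℝ | u ≤ F x} := by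
    intro u hu
    obtain ⟨y, hy⟩ := (hFbot.eventually (eventually_lt_nhds hu)).exists
    exact ⟨y, fun z hz => not_lt.1 fun hzy =>
      lt_irrefl u ((hz.trans (hFmono hzy.le)).trans_lt hy)⟩
  have hq_F : ∀ u : ℝ, 0 < u → u < 1 → u ≤ F (q u) := by
    intro u hu0 hu1
    obtain ⟨v, _, hvtend, hvmem⟩ := exists_seq_tendsto_sInf (hSne u hu1) (hSbdd u hu0)
    have hvtend' : Filter.Tendsto v Filter.atTop (nhds (q u)) := by
      rw [hqdef]; exact hvtend
    have hqle : ∀ n, v n ∈ Set.Ici (q u) := fun n => by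
      rw [hqdef]; exact csInf_le (hSbdd u hu0) (hvmem n)
    have hcomp : Filter.Tendsto (fun n => F (v n)) Filter.atTop (nhds (F (q u))) :=
      ((hFrc (q u)).tendsto).comp
        (tendsto_nhdsWithin_iff.mpr ⟨hvtend', Filter.Eventually.of_forall hqle⟩)
    exact ge_of_tendsto' hcomp fun n => hvmem n
  have hgal : ∀ u : ℝ, 0 < u → u < 1 → ∀ x, (q u ≤ x ↔ u ≤ F x) := by
    intro u hu0 hu1 x
    constructor
    · intro h; exact (hq_F u hu0 hu1).trans (hFmono h)
    · intro h; rw [hqdef]; exact csInf_le (hSbdd u hu0) h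
  have hqmono' : ∀ ⦃u v : ℝ⦄, 0 < u → u ≤ v → v < 1 → q u ≤ q v := by
    intro u v hu0 huv hv1
    rw [hqdef]
    exact csInf_le_csInf (hSbdd u hu0) (hSne v hv1) fun x hx => le_trans huv hx
  have hs : MeasurableSet {ω | l₀ < X ω} := measurableSet_lt measurable_const hXm
  have hFl₀ : F l₀ = α := by
    have hcompl : {ω | X ω ≤ l₀} = {ω | l₀ < X ω}ᶜ := by ext ω; simp [not_lt]
    have hP1 : P {ω | X ω ≤ l₀} = 1 - P {ω | l₀ < X ω} := by
      rw [hcompl, measure_compl hs (measure_ne_top _ _), measure_univ]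
    rw [hFdef]
    simp only
    rw [hP1, ENNReal.toReal_sub_of_le prob_le_one ENNReal.one_ne_top, ENNReal.toReal_one, hmass]
    ring
  have hql₀ : ∀ u ∈ Set.Ioo α (1:ℝ), l₀ ≤ q u := fun u hu =>
    hl₀q ▸ hqmono' hα0 hu.1.le hu.2
  -- Layer cake on the quantile side
  have hImeas : MeasurableSet (Set.Ioo α (1:ℝ)) := measurableSet_Ioo
  haveI hfinν : IsFiniteMeasure (volume.restrict (Set.Ioo α (1:ℝ))) := by
    constructor
    rw [Measure.restrict_apply_univ, Real.volume_Ioo]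
    exact ENNReal.ofReal_lt_top
  have hqmonoOn : MonotoneOn q (Set.Ioo α 1) := fun u hu v hv huv =>
    hqmono' (hα0.trans hu.1) huv hv.2
  have hg_mble : AEMeasurable (fun u => q u - l₀) (volume.restrict (Set.Ioo α 1)) :=
    (aemeasurable_restrict_of_monotoneOn hImeas hqmonoOn).sub aemeasurable_const
  have hg_nn : 0 ≤ᵐ[volume.restrict (Set.Ioo α 1)] fun u => q u - l₀ :=
    (ae_restrict_iff' hImeas).2 (Filter.Eventually.of_forall fun u hu =>
      sub_nonneg.2 (hql₀ u hu))
  have hQkey := lintegral_eq_lintegral_meas_lt (volume.restrict (Set.Ioo α 1)) hg_nn hg_mble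
  -- Layer cake on the loss side
  set Y : Ω → ℝ := fun ω => max (X ω - l₀) 0 with hYdef
  have hYint : Integrable Y P := by
    rw [hYdef]; exact (hX.sub (integrable_const l₀)).pos_part
  have hY_nn : 0 ≤ᵐ[P] Y := Filter.Eventually.of_forall fun ω => by
    rw [hYdef]; exact le_max_right _ _
  have hYkey := lintegral_eq_lintegral_meas_lt P hY_nn hYint.aemeasurable
  -- slice measures agree
  have hslice : ∀ t ∈ Set.Ioi (0:ℝ),
      (volume.restrict (Set.Ioo α 1)) {u | t < q u - l₀} = P {ω | t < Y ω} := by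
    intro t ht
    rw [Set.mem_Ioi] at ht
    have hFα : α ≤ F (l₀ + t) := hFl₀ ▸ hFmono (by linarith : l₀ ≤ l₀ + t)
    have hset1 : {u : ℝ | t < q u - l₀} ∩ Set.Ioo α 1 = Set.Ioo (F (l₀ + t)) 1 := by
      ext u
      simp only [Set.mem_inter_iff, Set.mem_setOf_eq, Set.mem_Ioo]
      constructor
      · rintro ⟨htq, hu1, hu2⟩
        refine ⟨?_, hu2⟩
        by_contra hle
        have := (hgal u (hα0.trans hu1) hu2 (l₀ + t)).2 (not_lt.1 hle)
        linarith
      · rintro ⟨hu1, hu2⟩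
        have huα : α < u := lt_of_le_of_lt hFα hu1
        have hu0 : 0 < u := hα0.trans huα
        have hnle : ¬ q u ≤ l₀ + t := fun h =>
          absurd ((hgal u hu0 hu2 _).1 h) (not_le.2 hu1)
        exact ⟨by linarith [not_le.1 hnle], huα, hu2⟩
    have hset2 : {ω | t < Y ω} = {ω | X ω ≤ l₀ + t}ᶜ := by
      ext ω
      simp only [Set.mem_setOf_eq, Set.mem_compl_iff, not_le, hYdef]
      constructor
      · intro h
        rcases lt_max_iff.1 h with h' | h'
        · linarith
        · linarith
      · intro h; exact lt_max_iff.2 (Or.inl (by linarith))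
    have hmeas2 : MeasurableSet {ω | X ω ≤ l₀ + t} := measurableSet_le hXm measurable_const
    rw [Measure.restrict_apply' hImeas, hset1, Real.volume_Ioo, hset2,
      measure_compl hmeas2 (measure_ne_top _ _), measure_univ]
    have hPle : P {ω | X ω ≤ l₀ + t} = ENNReal.ofReal (F (l₀ + t)) :=
      (ENNReal.ofReal_toReal (measure_ne_top _ _)).symm
    rw [hPle, ← ENNReal.ofReal_one, ← ENNReal.ofReal_sub 1 (hFnn (l₀ + t))]
  have hQP : ∫⁻ u, ENNReal.ofReal (q u - l₀) ∂(volume.restrict (Set.Ioo α 1))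
      = ∫⁻ ω, ENNReal.ofReal (Y ω) ∂P := by
    rw [hQkey, hYkey]
    exact setLIntegral_congr_fun measurableSet_Ioi
      (fun t ht => hslice t ht)
  have hYfin : ∫⁻ ω, ENNReal.ofReal (Y ω) ∂P ≠ ⊤ :=
    ((hasFiniteIntegral_iff_ofReal hY_nn).1 hYint.hasFiniteIntegral).ne
  have hgint : Integrable (fun u => q u - l₀) (volume.restrict (Set.Ioo α 1)) := by
    refine ⟨hg_mble.aestronglyMeasurable, ?_⟩
    rw [hasFiniteIntegral_iff_ofReal hg_nn, hQP]
    exact hYfin.lt_top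
  set M : ℝ := ∫ ω, Y ω ∂P with hMdef
  have hMeq : ∫ u in Set.Ioo α 1, (q u - l₀) = M := by
    rw [hMdef, integral_eq_lintegral_of_nonneg_ae hg_nn hg_mble.aestronglyMeasurable,
      integral_eq_lintegral_of_nonneg_ae hY_nn hYint.aestronglyMeasurable, hQP]
  have hvol : (volume (Set.Ioo α (1:ℝ))).toReal = 1 - α := by
    rw [Real.volume_Ioo, ENNReal.toReal_ofReal (by linarith)]
  have hqint : ∫ u in Set.Ioo α 1, q u = M + (1 - α) * l₀ := by
    have h1 : ∫ u in Set.Ioo α 1, q u = ∫ u in Set.Ioo α 1, ((q u - l₀) + l₀) :=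
      integral_congr_ae (Filter.Eventually.of_forall fun u => by ring)
    rw [h1, integral_add hgint (integrable_const l₀), hMeq, setIntegral_const,
      smul_eq_mul, measureReal_def, hvol]
  have hintervalq : ∫ u in α..1, VaR P X u = M + (1 - α) * l₀ := by
    rw [intervalIntegral.integral_of_le hα1.le, integral_Ioc_eq_integral_Ioo]
    simp only [hqVaR]
    exact hqint
  -- expectations involving ξ*
  set I : Ω → ℝ := fun ω => if l₀ < X ω then (1:ℝ) else 0 with hIdef
  have hIind : I = Set.indicator {ω | l₀ < X ω} (fun _ => (1:ℝ)) := by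
    funext ω
    by_cases h : l₀ < X ω <;> simp [hIdef, h, Set.indicator_apply]
  have hIint : Integrable I P := by
    rw [hIind]; exact (integrable_const (1:ℝ)).indicator hs
  have hI : ∫ ω, I ω ∂P = 1 - α := by
    rw [hIind, integral_indicator_const (1:ℝ) hs, smul_eq_mul, mul_one, measureReal_def, hmass]
  have hxi_eq : xiStar P X α = fun ω => (1 - α)⁻¹ * I ω := by
    funext ω
    by_cases h : l₀ < X ω <;> simp [xiStar, hIdef, ← hl₀def, h]
  have hxii : ∫ ω, xiStar P X α ω ∂P = 1 := by
    rw [hxi_eq]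
    simp only
    rw [integral_const_mul, hI]
    field_simp
  have hXxi : ∫ ω, X ω * xiStar P X α ω ∂P = (1 - α)⁻¹ * (M + l₀ * (1 - α)) := by
    have hfun : (fun ω => X ω * xiStar P X α ω)
        = fun ω => (1 - α)⁻¹ * (Y ω + l₀ * I ω) := by
      funext ω
      by_cases h : l₀ < X ω
      · have hmax : Y ω = X ω - l₀ := by
          rw [hYdef]; exact max_eq_left (by linarith)
        simp only [xiStar, hIdef, ← hl₀def, h, if_pos, if_true, hmax]
        ring
      · have hmax : Y ω = 0 := by
          rw [hYdef]; exact max_eq_right (by linarith [not_lt.1 h])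
        simp only [xiStar, hIdef, ← hl₀def, h, if_false, hmax]
        ring
    rw [hfun, integral_const_mul, integral_add hYint (hIint.const_mul l₀),
      integral_const_mul, hI, ← hMdef]
  have hLval : ∀ l : ℝ, Lagr P X (xiStar P X α) l = (1 - α)⁻¹ * (M + l₀ * (1 - α)) := by
    intro l
    simp only [Lagr, hxii, hXxi]
    ring
  refine ⟨?_, ?_, ?_⟩
  · -- saddle point: maximality in ξ
    intro ξ hξm hb
    have hint2 : Integrable ξ P := by
      refine Integrable.mono' (integrable_const ((1 - α)⁻¹)) hξm.aestronglyMeasurable ?_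
      filter_upwards [hb] with ω h
      rw [Real.norm_eq_abs, abs_of_nonneg h.1]
      exact h.2
    have hint1 : Integrable (fun ω => X ω * ξ ω) P := by
      refine Integrable.mono' (hX.abs.const_mul ((1 - α)⁻¹))
        (hX.aestronglyMeasurable.mul hξm.aestronglyMeasurable) ?_
      filter_upwards [hb] with ω h
      rw [Real.norm_eq_abs, abs_mul, abs_of_nonneg h.1]
      calc |X ω| * ξ ω ≤ |X ω| * (1 - α)⁻¹ :=
            mul_le_mul_of_nonneg_left h.2 (abs_nonneg _)
        _ = (1 - α)⁻¹ * |X ω| := mul_comm _ _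
    have hint3 : Integrable (fun ω => (X ω - l₀) * ξ ω) P :=
      (hint1.sub (hint2.const_mul l₀)).congr
        (Filter.Eventually.of_forall fun ω => by simp only [Pi.sub_apply]; ring)
    have hptwise : (fun ω => (X ω - l₀) * ξ ω) ≤ᵐ[P] fun ω => (1 - α)⁻¹ * Y ω := by
      filter_upwards [hb] with ω h
      by_cases hc : l₀ < X ω
      · have hmax : Y ω = X ω - l₀ := by
          rw [hYdef]; exact max_eq_left (by linarith)
        rw [hmax]
        calc (X ω - l₀) * ξ ω ≤ (X ω - l₀) * (1 - α)⁻¹ :=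
              mul_le_mul_of_nonneg_left h.2 (by linarith)
          _ = (1 - α)⁻¹ * (X ω - l₀) := mul_comm _ _
      · have hmax : Y ω = 0 := by
          rw [hYdef]; exact max_eq_right (by linarith [not_lt.1 hc])
        rw [hmax, mul_zero]
        nlinarith [mul_nonneg h.1 (sub_nonneg.2 (not_lt.1 hc))]
    have hmono := integral_mono_ae hint3 (hYint.const_mul ((1 - α)⁻¹)) hptwise
    have h2 : ∫ ω, (1 - α)⁻¹ * Y ω ∂P = (1 - α)⁻¹ * M := by
      rw [integral_const_mul, ← hMdef]
    have h3 : ∫ ω, (X ω - l₀) * ξ ω ∂P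
        = (∫ ω, X ω * ξ ω ∂P) - l₀ * ∫ ω, ξ ω ∂P := by
      have hfn : (fun ω => (X ω - l₀) * ξ ω) = fun ω => X ω * ξ ω - l₀ * ξ ω :=
        funext fun ω => by ring
      rw [hfn, integral_sub hint1 (hint2.const_mul l₀), integral_const_mul]
    rw [h3, h2] at hmono
    rw [hLval l₀]
    simp only [Lagr]
    have hrhs : (1 - α)⁻¹ * (M + l₀ * (1 - α)) = (1 - α)⁻¹ * M + l₀ := by
      field_simp
    rw [hrhs]
    linarith
  · -- the Lagrangian is constant in l at ξ*
    intro l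
    rw [hLval l₀, hLval l]
  · -- value equals CVaR
    rw [hLval l₀]
    show (1 - α)⁻¹ * (M + l₀ * (1 - α)) = CVaR P X α
    unfold CVaR
    rw [hintervalq]
    ring
end
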